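/- Let (E, F) be a resistance form on a set X whose resistance metric R is complete and such that (X,R) is doubling. Then for every u ∈ F there exists a sequence {u_n}_{n≥0} ⊆ F ∩ C₀(X,R) such that supp(u_n) ⊆ supp(u) for every n and lim_{n→∞} E(u − u_n, u − u_n) = 0, where C₀(X,R) is the space of continuous real-valued functions on (X,R) with compact support and supp(u) := cl({x ∈ X : u(x) ≠ 0}). -/

import Mathlib

open Filter Set Metric
open scoped ENNReal Topology

/-- A resistance form `(E, F)` on a set `X` (Kigami):
`F` is a linear subspace of the real-valued functions on `X`, `E` is a nonnegative
symmetric bilinear form on `F` such that (RF1) constants belong to `F` and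
`E(u,u) = 0` iff `u` is constant, (RF2) the quotient of `F` by the constants is a
Hilbert space under `E` (stated as completeness of the `E`-seminorm on `F`),
(RF3) points of `X` are separated by `F`, (RF4) for `x ≠ y` the quantity
`R(x,y) = (inf {E(u,u) : u ∈ F, u x = 1, u y = 0})⁻¹` is finite (i.e. the infimum
is positive; an admissible `u` always exists), and (RF5) the Markov property holds
for the unit truncation. -/
structure ResistanceForm (X : Type*) where
  F : Set (X → ℝ)
  E : (X → ℝ) → (X → ℝ) → ℝ
  zero_mem : (0 : X → ℝ) ∈ F
  add_mem : ∀ {u v : X → ℝ}, u ∈ F → v ∈ F → u + v ∈ F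
  smul_mem : ∀ (c : ℝ) {u : X → ℝ}, u ∈ F → c • u ∈ F
  const_mem : ∀ c : ℝ, (fun _ => c) ∈ F
  symm : ∀ u ∈ F, ∀ v ∈ F, E u v = E v u
  add_left : ∀ u ∈ F, ∀ v ∈ F, ∀ w ∈ F, E (u + v) w = E u w + E v w
  smul_left : ∀ (c : ℝ), ∀ u ∈ F, ∀ v ∈ F, E (c • u) v = c * E u v
  nonneg : ∀ u ∈ F, 0 ≤ E u u
  null_iff_const : ∀ u ∈ F, (E u u = 0 ↔ ∃ c : ℝ, ∀ x, u x = c)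
  complete : ∀ u : ℕ → (X → ℝ), (∀ n, u n ∈ F) →
    (∀ ε : ℝ, 0 < ε → ∃ N : ℕ, ∀ m ≥ N, ∀ n ≥ N, E (u m - u n) (u m - u n) < ε) →
    ∃ v ∈ F, ∀ ε : ℝ, 0 < ε → ∃ N : ℕ, ∀ n ≥ N, E (v - u n) (v - u n) < ε
  sep : ∀ x y : X, x ≠ y → ∃ u ∈ F, u x ≠ u y
  exists_unit : ∀ x y : X, x ≠ y → ∃ u ∈ F, u x = 1 ∧ u y = 0
  inf_pos : ∀ x y : X, x ≠ y →
    0 < sInf {e : ℝ | ∃ u ∈ F, u x = 1 ∧ u y = 0 ∧ E u u = e}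
  markov : ∀ u ∈ F, (fun x => max 0 (min 1 (u x))) ∈ F ∧
    E (fun x => max 0 (min 1 (u x))) (fun x => max 0 (min 1 (u x))) ≤ E u u

namespace ResistanceForm

variable {X : Type*}

open Classical in
/-- The resistance metric `R` associated with a resistance form:
`R(x,x) = 0` and `R(x,y) = (inf {E(u,u) : u ∈ F, u x = 1, u y = 0})⁻¹` for `x ≠ y`. -/
noncomputable def rmetric (rf : ResistanceForm X) (x y : X) : ℝ :=
  if x = y then 0
  else (sInf {e : ℝ | ∃ u ∈ rf.F, u x = 1 ∧ u y = 0 ∧ rf.E u u = e})⁻¹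

open Classical in
/-- The resistance `𝓡(A,B)` between two sets: the reciprocal of the minimal energy of
functions that are `≡ 1` on `A` and `≡ 0` on `B` if such functions exist, `0` if no
such function exists, and `∞` if `A` or `B` is empty. -/
noncomputable def setRes (rf : ResistanceForm X) (A B : Set X) : ℝ≥0∞ :=
  if A.Nonempty ∧ B.Nonempty then
    (if ∃ u ∈ rf.F, (∀ x ∈ A, u x = 1) ∧ (∀ x ∈ B, u x = 0) then
      (ENNReal.ofReal
        (sInf {e : ℝ | ∃ u ∈ rf.F, (∀ x ∈ A, u x = 1) ∧ (∀ x ∈ B, u x = 0) ∧ rf.E u u = e}))⁻¹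
    else 0)
  else ⊤

end ResistanceForm

/-- A distance function `ρ` on `X` is doubling: there is `N ∈ ℕ` such that every ball of
radius `2r` is covered by `N` balls of radius `r`. -/
def DoublingOf {X : Type*} (ρ : X → X → ℝ) : Prop :=
  ∃ N : ℕ, ∀ (x : X) (r : ℝ), ∃ s : Finset X, s.card ≤ N ∧
    {y : X | ρ x y < 2 * r} ⊆ ⋃ z ∈ s, {y : X | ρ z y < r}

/-- A distance function `ρ` on `X` is uniformly perfect: there is `γ > 1` such that
`B(x, γ r) \ B(x, r) ≠ ∅` whenever `B(x,r)` is not the whole space. -/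
def UniformlyPerfectOf {X : Type*} (ρ : X → X → ℝ) : Prop :=
  ∃ γ : ℝ, 1 < γ ∧ ∀ (x : X) (r : ℝ), 0 < r → {y : X | ρ x y < r} ≠ Set.univ →
    ({y : X | ρ x y < γ * r} \ {y : X | ρ x y < r}).Nonempty

section Basic

variable {X : Type*} (rf : ResistanceForm X)

namespace ResistanceForm

lemma neg_mem' {u : X → ℝ} (hu : u ∈ rf.F) : -u ∈ rf.F := by
  simpa [neg_one_smul] using rf.smul_mem (-1) hu

lemma sub_mem' {u v : X → ℝ} (hu : u ∈ rf.F) (hv : v ∈ rf.F) : u - v ∈ rf.F := by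
  simpa [sub_eq_add_neg] using rf.add_mem hu (rf.neg_mem' hv)

lemma add_right' {u v w : X → ℝ} (hu : u ∈ rf.F) (hv : v ∈ rf.F) (hw : w ∈ rf.F) :
    rf.E u (v + w) = rf.E u v + rf.E u w := by
  rw [rf.symm u hu (v + w) (rf.add_mem hv hw), rf.add_left v hv w hw u hu,
    rf.symm v hv u hu, rf.symm w hw u hu]

lemma smul_right' (c : ℝ) {u v : X → ℝ} (hu : u ∈ rf.F) (hv : v ∈ rf.F) :
    rf.E u (c • v) = c * rf.E u v := by
  rw [rf.symm u hu (c • v) (rf.smul_mem c hv), rf.smul_left c v hv u hu, rf.symm v hv u hu]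

lemma neg_left' {u v : X → ℝ} (hu : u ∈ rf.F) (hv : v ∈ rf.F) :
    rf.E (-u) v = -rf.E u v := by
  have := rf.smul_left (-1) u hu v hv
  simpa [neg_one_smul] using this

lemma neg_right' {u v : X → ℝ} (hu : u ∈ rf.F) (hv : v ∈ rf.F) :
    rf.E u (-v) = -rf.E u v := by
  have := rf.smul_right' (-1) hu hv
  simpa [neg_one_smul] using this

lemma sub_left' {u v w : X → ℝ} (hu : u ∈ rf.F) (hv : v ∈ rf.F) (hw : w ∈ rf.F) :
    rf.E (u - v) w = rf.E u w - rf.E v w := by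
  rw [sub_eq_add_neg, rf.add_left u hu (-v) (rf.neg_mem' hv) w hw, rf.neg_left' hv hw,
    sub_eq_add_neg]

lemma sub_right' {u v w : X → ℝ} (hu : u ∈ rf.F) (hv : v ∈ rf.F) (hw : w ∈ rf.F) :
    rf.E u (v - w) = rf.E u v - rf.E u w := by
  rw [sub_eq_add_neg, rf.add_right' hu hv (rf.neg_mem' hw), rf.neg_right' hu hw,
    sub_eq_add_neg]

lemma E_zero_left' {v : X → ℝ} (hv : v ∈ rf.F) : rf.E 0 v = 0 := by
  have h := rf.smul_left 0 0 rf.zero_mem v hv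
  simpa [zero_smul] using h

lemma E_self_expand {u v : X → ℝ} (hu : u ∈ rf.F) (hv : v ∈ rf.F) :
    rf.E (u + v) (u + v) = rf.E u u + 2 * rf.E u v + rf.E v v := by
  have huv := rf.add_mem hu hv
  rw [rf.add_left u hu v hv (u + v) huv, rf.add_right' hu hu hv, rf.add_right' hv hu hv,
    rf.symm v hv u hu]
  ring

lemma E_sub_expand {u v : X → ℝ} (hu : u ∈ rf.F) (hv : v ∈ rf.F) :
    rf.E (u - v) (u - v) = rf.E u u - 2 * rf.E u v + rf.E v v := by
  have huv := rf.sub_mem' hu hv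
  rw [rf.sub_left' hu hv huv, rf.sub_right' hu hu hv, rf.sub_right' hv hu hv,
    rf.symm v hv u hu]
  ring

lemma cs {u v : X → ℝ} (hu : u ∈ rf.F) (hv : v ∈ rf.F) :
    (rf.E u v) ^ 2 ≤ rf.E u u * rf.E v v := by
  have key : ∀ t : ℝ, 0 ≤ rf.E v v * (t * t) + (2 * rf.E u v) * t + rf.E u u := by
    intro t
    have h0 := rf.nonneg _ (rf.add_mem hu (rf.smul_mem t hv))
    have hexp : rf.E (u + t • v) (u + t • v)
        = rf.E u u + 2 * (t * rf.E u v) + t * (t * rf.E v v) := by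
      rw [rf.E_self_expand hu (rf.smul_mem t hv), rf.smul_right' t hu hv,
        rf.smul_left t v hv (t • v) (rf.smul_mem t hv), rf.smul_right' t hv hv]
    nlinarith [h0, hexp]
  have hd := discrim_le_zero (a := rf.E v v) (b := 2 * rf.E u v) (c := rf.E u u) key
  rw [discrim] at hd
  nlinarith [hd]

/-- The energy seminorm. -/
noncomputable def en (u : X → ℝ) : ℝ := Real.sqrt (rf.E u u)

lemma en_nonneg (u : X → ℝ) : 0 ≤ rf.en u := Real.sqrt_nonneg _

lemma en_sq {u : X → ℝ} (hu : u ∈ rf.F) : (rf.en u) ^ 2 = rf.E u u := by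
  rw [en, Real.sq_sqrt (rf.nonneg u hu)]

lemma abs_E_le {u v : X → ℝ} (hu : u ∈ rf.F) (hv : v ∈ rf.F) :
    |rf.E u v| ≤ rf.en u * rf.en v := by
  have h := rf.cs hu hv
  have : |rf.E u v| = Real.sqrt ((rf.E u v) ^ 2) := by
    rw [Real.sqrt_sq_eq_abs]
  rw [this, en, en, ← Real.sqrt_mul (rf.nonneg u hu)]
  exact Real.sqrt_le_sqrt h

lemma E_le_en_mul {u v : X → ℝ} (hu : u ∈ rf.F) (hv : v ∈ rf.F) :
    rf.E u v ≤ rf.en u * rf.en v :=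
  le_trans (le_abs_self _) (rf.abs_E_le hu hv)

lemma en_add_le {u v : X → ℝ} (hu : u ∈ rf.F) (hv : v ∈ rf.F) :
    rf.en (u + v) ≤ rf.en u + rf.en v := by
  have h2 : rf.E (u + v) (u + v) ≤ (rf.en u + rf.en v) ^ 2 := by
    rw [rf.E_self_expand hu hv]
    have h3 := rf.E_le_en_mul hu hv
    have h4 := rf.en_sq hu
    have h5 := rf.en_sq hv
    nlinarith
  have := Real.sqrt_le_sqrt h2
  rwa [Real.sqrt_sq (add_nonneg (rf.en_nonneg u) (rf.en_nonneg v))] at this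

lemma en_smul (c : ℝ) {u : X → ℝ} (hu : u ∈ rf.F) : rf.en (c • u) = |c| * rf.en u := by
  have hE : rf.E (c • u) (c • u) = (c * c) * rf.E u u := by
    rw [rf.smul_left c u hu (c • u) (rf.smul_mem c hu), rf.smul_right' c hu hu] ; ring
  have h2 : (|c| * rf.en u) ^ 2 = (c * c) * rf.E u u := by
    rw [mul_pow, sq_abs, rf.en_sq hu] ; ring
  rw [en, hE, ← h2, Real.sqrt_sq (mul_nonneg (abs_nonneg c) (rf.en_nonneg u))]

lemma en_sub_le {u v : X → ℝ} (hu : u ∈ rf.F) (hv : v ∈ rf.F) :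
    rf.en (u - v) ≤ rf.en u + rf.en v := by
  have := rf.en_add_le hu (rf.neg_mem' hv)
  have hn : rf.en (-v) = rf.en v := by
    have := rf.en_smul (-1) hv ; simpa [neg_one_smul] using this
  simpa [sub_eq_add_neg, hn] using this

lemma en_le_of_sub {u v : X → ℝ} (hu : u ∈ rf.F) (hv : v ∈ rf.F) :
    rf.en u ≤ rf.en v + rf.en (u - v) := by
  have h := rf.en_add_le hv (rf.sub_mem' hu hv)
  simpa [add_sub_cancel] using h

lemma E_const_self (c : ℝ) : rf.E (fun _ => c) (fun _ => c) = 0 :=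
  (rf.null_iff_const _ (rf.const_mem c)).2 ⟨c, fun _ => rfl⟩

lemma E_const_left (c : ℝ) {v : X → ℝ} (hv : v ∈ rf.F) : rf.E (fun _ => c) v = 0 := by
  have h := rf.cs (rf.const_mem c) hv
  rw [rf.E_const_self] at h
  nlinarith [sq_nonneg (rf.E (fun _ => c) v)]

lemma E_const_right (c : ℝ) {v : X → ℝ} (hv : v ∈ rf.F) : rf.E v (fun _ => c) = 0 := by
  rw [rf.symm v hv _ (rf.const_mem c)] ; exact rf.E_const_left c hv

lemma E_sub_const {u : X → ℝ} (hu : u ∈ rf.F) (c : ℝ) :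
    rf.E (u - fun _ => c) (u - fun _ => c) = rf.E u u := by
  rw [rf.E_sub_expand hu (rf.const_mem c), rf.E_const_self, rf.E_const_right c hu]
  ring

lemma E_diff_self {a b : X → ℝ} (ha : a ∈ rf.F) (hb : b ∈ rf.F) :
    rf.E a a - rf.E b b = rf.E (a - b) (a + b) := by
  rw [rf.sub_left' ha hb (rf.add_mem ha hb), rf.add_right' ha ha hb, rf.add_right' hb ha hb,
    rf.symm b hb a ha]
  ring

end ResistanceForm

end Basic
section MetricPart

variable {X : Type*} [MetricSpace X] (rf : ResistanceForm X)
  (hR : ∀ x y : X, dist x y = rf.rmetric x y)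

set_option linter.unusedSectionVars false

namespace ResistanceForm

/-- The admissible-energy set between two points. -/
def eset (x y : X) : Set ℝ := {e : ℝ | ∃ u ∈ rf.F, u x = 1 ∧ u y = 0 ∧ rf.E u u = e}

lemma eset_nonempty {x y : X} (hxy : x ≠ y) : (rf.eset x y).Nonempty := by
  obtain ⟨u, hu, h1, h0⟩ := rf.exists_unit x y hxy
  exact ⟨rf.E u u, u, hu, h1, h0, rfl⟩

lemma eset_bddBelow (x y : X) : BddBelow (rf.eset x y) := by
  refine ⟨0, fun e he => ?_⟩
  obtain ⟨u, hu, _, _, hE⟩ := he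
  exact hE ▸ rf.nonneg u hu

include hR in
lemma dist_eq_inv {x y : X} (hxy : x ≠ y) : dist x y = (sInf (rf.eset x y))⁻¹ := by
  rw [hR x y, rmetric, if_neg hxy] ; rfl

include hR in
lemma sInf_eset_eq {x y : X} (hxy : x ≠ y) : sInf (rf.eset x y) = (dist x y)⁻¹ := by
  rw [rf.dist_eq_inv hR hxy, inv_inv]

include hR in
lemma holder {u : X → ℝ} (hu : u ∈ rf.F) (x y : X) :
    (u x - u y) ^ 2 ≤ rf.E u u * dist x y := by
  rcases eq_or_ne x y with rfl | hxy
  · simp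
  by_cases huv : u x = u y
  · simp only [huv, sub_self]
    simpa using mul_nonneg (rf.nonneg u hu) dist_nonneg
  set a := u x - u y with ha
  have ha0 : a ≠ 0 := sub_ne_zero.2 huv
  set w : X → ℝ := a⁻¹ • (u - fun _ => u y) with hw
  have hwF : w ∈ rf.F := rf.smul_mem _ (rf.sub_mem' hu (rf.const_mem _))
  have hwx : w x = 1 := by
    simp only [hw, Pi.smul_apply, Pi.sub_apply, smul_eq_mul]
    field_simp
    exact ha.symm
  have hwy : w y = 0 := by
    simp [hw]
  have hEw : rf.E w w = a⁻¹ * (a⁻¹ * rf.E u u) := by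
    rw [hw, rf.smul_left _ _ (rf.sub_mem' hu (rf.const_mem _)) _
        (rf.smul_mem _ (rf.sub_mem' hu (rf.const_mem _))),
      rf.smul_right' _ (rf.sub_mem' hu (rf.const_mem _)) (rf.sub_mem' hu (rf.const_mem _)),
      rf.E_sub_const hu]
  have hmem : rf.E w w ∈ rf.eset x y := ⟨w, hwF, hwx, hwy, rfl⟩
  have hle : sInf (rf.eset x y) ≤ a⁻¹ * (a⁻¹ * rf.E u u) := by
    rw [← hEw] ; exact csInf_le (rf.eset_bddBelow x y) hmem
  rw [rf.sInf_eset_eq hR hxy] at hle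
  have hd : (0:ℝ) < dist x y := dist_pos.2 hxy
  have h2 : a ^ 2 * (dist x y)⁻¹ ≤ rf.E u u := by
    calc a ^ 2 * (dist x y)⁻¹ ≤ a ^ 2 * (a⁻¹ * (a⁻¹ * rf.E u u)) :=
          mul_le_mul_of_nonneg_left hle (sq_nonneg a)
    _ = rf.E u u := by field_simp
  calc a ^ 2 = a ^ 2 * (dist x y)⁻¹ * dist x y := by field_simp
  _ ≤ rf.E u u * dist x y := mul_le_mul_of_nonneg_right h2 (le_of_lt hd)

include hR in
lemma continuous_of_mem {u : X → ℝ} (hu : u ∈ rf.F) : Continuous u := by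
  rw [Metric.continuous_iff]
  intro x ε hε
  have hE0 := rf.nonneg u hu
  refine ⟨ε ^ 2 / (rf.E u u + 1), div_pos (by positivity) (by linarith), fun y hy => ?_⟩
  have h1 := rf.holder hR hu y x
  have hd1 : (0:ℝ) < rf.E u u + 1 := by linarith
  have h2 : (u y - u x) ^ 2 < ε ^ 2 := by
    have hA : rf.E u u * dist y x ≤ rf.E u u * (ε ^ 2 / (rf.E u u + 1)) :=
      mul_le_mul_of_nonneg_left (le_of_lt hy) hE0
    have hB : rf.E u u * (ε ^ 2 / (rf.E u u + 1)) < ε ^ 2 := by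
      rw [mul_div_assoc', div_lt_iff₀ hd1]
      nlinarith
    calc (u y - u x) ^ 2 ≤ rf.E u u * dist y x := h1
    _ ≤ rf.E u u * (ε ^ 2 / (rf.E u u + 1)) := hA
    _ < ε ^ 2 := hB
  have := Real.sqrt_lt_sqrt (sq_nonneg _) h2
  rwa [Real.sqrt_sq_eq_abs, Real.sqrt_sq (le_of_lt hε), ← Real.dist_eq] at this

/-- unit clamp -/
lemma clamp_mem {u : X → ℝ} (hu : u ∈ rf.F) :
    (fun x => max 0 (min 1 (u x))) ∈ rf.F := (rf.markov u hu).1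

include hR in
lemma near_min {x y : X} (hxy : x ≠ y) {ε : ℝ} (hε : 0 < ε) :
    ∃ h ∈ rf.F, h x = 1 ∧ h y = 0 ∧ (∀ z, 0 ≤ h z ∧ h z ≤ 1) ∧
      rf.E h h ≤ (dist x y)⁻¹ + ε := by
  have hne := rf.eset_nonempty hxy
  have hlt : sInf (rf.eset x y) < (dist x y)⁻¹ + ε := by
    rw [rf.sInf_eset_eq hR hxy] ; linarith
  obtain ⟨e, he, helt⟩ := exists_lt_of_csInf_lt hne hlt
  obtain ⟨v, hv, hv1, hv0, hvE⟩ := he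
  refine ⟨fun z => max 0 (min 1 (v z)), rf.clamp_mem hv, by simp [hv1], by simp [hv0],
    fun z => ⟨le_max_left _ _, by simp⟩, ?_⟩
  have := (rf.markov v hv).2
  rw [hvE] at this
  exact le_trans this (le_of_lt helt)

end ResistanceForm

end MetricPart
section Variational

variable {X : Type*} [MetricSpace X] (rf : ResistanceForm X)
  (hR : ∀ x y : X, dist x y = rf.rmetric x y)

set_option linter.unusedSectionVars false

lemma RFquad_zero {a b : ℝ} (ha : 0 ≤ a) (h : ∀ t : ℝ, 0 ≤ a * t ^ 2 + 2 * b * t) :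
    b = 0 := by
  by_contra hb
  have ht := h (-b / (a + 1))
  have ha1 : (0:ℝ) < a + 1 := by linarith
  have hb2 : 0 < b ^ 2 := lt_of_le_of_ne (sq_nonneg b) (Ne.symm (pow_ne_zero 2 hb))
  have hkey : a * (-b / (a + 1)) ^ 2 + 2 * b * (-b / (a + 1)) =
      -((b ^ 2) * (a + 2)) / (a + 1) ^ 2 := by field_simp ; ring
  rw [hkey] at ht
  have : 0 < (b ^ 2) * (a + 2) / (a + 1) ^ 2 :=
    div_pos (mul_pos hb2 (by linarith)) (pow_pos ha1 2)
  rw [neg_div] at ht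
  linarith

lemma RFtendsto_nonneg_of_eps {f : ℕ → ℝ} (h0 : ∀ n, 0 ≤ f n)
    (h : ∀ ε : ℝ, 0 < ε → ∃ N : ℕ, ∀ n ≥ N, f n < ε) : Tendsto f atTop (𝓝 0) := by
  rw [Metric.tendsto_atTop]
  intro ε hε
  obtain ⟨N, hN⟩ := h ε hε
  exact ⟨N, fun n hn => by rw [Real.dist_eq, sub_zero, abs_of_nonneg (h0 n)] ; exact hN n hn⟩

lemma RFone_div_tendsto : Tendsto (fun n : ℕ => 1 / ((n:ℝ) + 1)) atTop (𝓝 0) :=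
  tendsto_one_div_add_atTop_nhds_zero_nat

namespace ResistanceForm

/-- If `E(v - wₙ) → 0` then `E(h, wₙ) → E(h, v)`. -/
lemma tendsto_inner_of_E_sub {v : X → ℝ} (hv : v ∈ rf.F) {w : ℕ → X → ℝ}
    (hw : ∀ n, w n ∈ rf.F)
    (hlim : Tendsto (fun n => rf.E (v - w n) (v - w n)) atTop (𝓝 0))
    {h : X → ℝ} (hh : h ∈ rf.F) :
    Tendsto (fun n => rf.E h (w n)) atTop (𝓝 (rf.E h v)) := by
  have ht : Tendsto (fun n => rf.en (v - w n)) atTop (𝓝 0) := by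
    have := (Real.continuous_sqrt.tendsto 0).comp hlim
    simpa [ResistanceForm.en, Real.sqrt_zero, Function.comp_def] using this
  have hbnd : ∀ n, |rf.E h (w n) - rf.E h v| ≤ rf.en h * rf.en (v - w n) := by
    intro n
    have heq : rf.E h (w n) - rf.E h v = -rf.E h (v - w n) := by
      rw [rf.sub_right' hh hv (hw n)] ; ring
    rw [heq, abs_neg]
    exact rf.abs_E_le hh (rf.sub_mem' hv (hw n))
  have hb : Tendsto (fun n => rf.en h * rf.en (v - w n)) atTop (𝓝 0) := by
    simpa using (tendsto_const_nhds (x := rf.en h)).mul ht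
  have hbnd' : ∀ n, ‖rf.E h (w n) - rf.E h v‖ ≤ rf.en h * rf.en (v - w n) := by
    simpa [Real.norm_eq_abs] using hbnd
  have hsq := squeeze_zero_norm hbnd' hb
  have h2 := hsq.add (tendsto_const_nhds (x := rf.E h v))
  simpa using h2

/-- If `E(v - wₙ) → 0` and all in `F` then `E(wₙ,wₙ) → E(v,v)`. -/
lemma tendsto_E_self_of_E_sub {v : X → ℝ} (hv : v ∈ rf.F) {w : ℕ → X → ℝ}
    (hw : ∀ n, w n ∈ rf.F)
    (hlim : Tendsto (fun n => rf.E (v - w n) (v - w n)) atTop (𝓝 0)) :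
    Tendsto (fun n => rf.E (w n) (w n)) atTop (𝓝 (rf.E v v)) := by
  have ht : Tendsto (fun n => rf.en (v - w n)) atTop (𝓝 0) := by
    have := (Real.continuous_sqrt.tendsto 0).comp hlim
    simpa [ResistanceForm.en, Real.sqrt_zero, Function.comp_def] using this
  have hbnd : ∀ n, |rf.E (w n) (w n) - rf.E v v| ≤
      rf.en (v - w n) * (2 * rf.en v + rf.en (v - w n)) := by
    intro n
    have hd : rf.E (w n) (w n) - rf.E v v = rf.E (w n - v) (w n + v) :=
      rf.E_diff_self (hw n) hv
    rw [hd]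
    have h1 : |rf.E (w n - v) (w n + v)| ≤ rf.en (w n - v) * rf.en (w n + v) :=
      rf.abs_E_le (rf.sub_mem' (hw n) hv) (rf.add_mem (hw n) hv)
    have h2 : rf.en (w n - v) = rf.en (v - w n) := by
      have heq : w n - v = (-1 : ℝ) • (v - w n) := by funext z ; simp
      rw [heq, rf.en_smul (-1) (rf.sub_mem' hv (hw n))] ; simp
    have h3 : rf.en (w n + v) ≤ 2 * rf.en v + rf.en (v - w n) := by
      have heq : w n + v = v + v - (v - w n) := by funext z ; simp ; ring
      rw [heq]
      have h5 := rf.en_sub_le (rf.add_mem hv hv) (rf.sub_mem' hv (hw n))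
      have h4 : rf.en (v + v) ≤ rf.en v + rf.en v := rf.en_add_le hv hv
      calc rf.en (v + v - (v - w n)) ≤ rf.en (v + v) + rf.en (v - w n) := h5
      _ ≤ 2 * rf.en v + rf.en (v - w n) := by linarith
    calc |rf.E (w n - v) (w n + v)| ≤ rf.en (w n - v) * rf.en (w n + v) := h1
    _ ≤ rf.en (v - w n) * (2 * rf.en v + rf.en (v - w n)) := by
        rw [h2]
        exact mul_le_mul_of_nonneg_left h3 (rf.en_nonneg _)
  have hb : Tendsto (fun n => rf.en (v - w n) * (2 * rf.en v + rf.en (v - w n)))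
      atTop (𝓝 0) := by
    have := ht.mul ((tendsto_const_nhds (x := 2 * rf.en v)).add ht)
    simpa using this
  have hbnd' : ∀ n, ‖rf.E (w n) (w n) - rf.E v v‖ ≤
      rf.en (v - w n) * (2 * rf.en v + rf.en (v - w n)) := by
    simpa [Real.norm_eq_abs] using hbnd
  have hsq := squeeze_zero_norm hbnd' hb
  have h2 := hsq.add (tendsto_const_nhds (x := rf.E v v))
  simpa using h2

/-- Riesz representation via direct minimization. -/
lemma riesz (lam : (X → ℝ) → ℝ)
    (hladd : ∀ u ∈ rf.F, ∀ v ∈ rf.F, lam (u + v) = lam u + lam v)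
    (hlsmul : ∀ (c : ℝ), ∀ u ∈ rf.F, lam (c • u) = c * lam u)
    {C : ℝ} (hC : 0 ≤ C) (hbd : ∀ w ∈ rf.F, (lam w) ^ 2 ≤ C * rf.E w w) :
    ∃ g ∈ rf.F, (∀ h ∈ rf.F, rf.E g h = lam h) ∧ rf.E g g ≤ C := by
  classical
  have hlam0 : lam 0 = 0 := by
    have := hlsmul 0 0 rf.zero_mem
    simpa [zero_smul] using this
  set Q : (X → ℝ) → ℝ := fun w => rf.E w w - 2 * lam w with hQ
  set S : Set ℝ := {e | ∃ w ∈ rf.F, Q w = e} with hS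
  have hSne : S.Nonempty := ⟨Q 0, 0, rf.zero_mem, rfl⟩
  have hlow : ∀ w ∈ rf.F, -C ≤ Q w := by
    intro w hw
    have h1 := hbd w hw
    have h2 := rf.nonneg w hw
    have : Q w = rf.E w w - 2 * lam w := rfl
    nlinarith [sq_nonneg (C + rf.E w w - 2 * lam w), sq_nonneg (C - rf.E w w)]
  have hSbdd : BddBelow S := ⟨-C, fun e ⟨w, hw, hQw⟩ => hQw ▸ hlow w hw⟩
  set m := sInf S with hm
  have hwk : ∀ k : ℕ, ∃ w ∈ rf.F, Q w < m + 1 / (k + 1) := by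
    intro k
    have hlt : m < m + 1 / (k + 1) := by
      have : (0:ℝ) < 1 / ((k:ℝ) + 1) := by positivity
      linarith
    obtain ⟨e, ⟨w, hw, hQw⟩, helt⟩ := exists_lt_of_csInf_lt hSne hlt
    exact ⟨w, hw, hQw ▸ helt⟩
  choose w hwF hwQ using hwk
  have hmemQ : ∀ f ∈ rf.F, m ≤ Q f := fun f hf => csInf_le hSbdd ⟨f, hf, rfl⟩
  have hlsub : ∀ u ∈ rf.F, ∀ v ∈ rf.F, lam (u - v) = lam u - lam v := by
    intro u hu v hv
    have h1 := hladd v hv (u - v) (rf.sub_mem' hu hv)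
    rw [show v + (u - v) = u by ring] at h1
    linarith
  have hpar : ∀ k l : ℕ, rf.E (w k - w l) (w k - w l)
      ≤ 2 / ((k:ℝ) + 1) + 2 / ((l:ℝ) + 1) := by
    intro k l
    set mid := (1/2 : ℝ) • (w k + w l) with hmid
    have hmidF : mid ∈ rf.F := rf.smul_mem _ (rf.add_mem (hwF k) (hwF l))
    have hQmid : m ≤ Q mid := hmemQ mid hmidF
    have hlammid : lam mid = (1/2) * (lam (w k) + lam (w l)) := by
      rw [hmid, hlsmul _ _ (rf.add_mem (hwF k) (hwF l)), hladd _ (hwF k) _ (hwF l)]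
    have hEmid : rf.E mid mid = (1/4) * (rf.E (w k) (w k) + 2 * rf.E (w k) (w l)
        + rf.E (w l) (w l)) := by
      rw [hmid, rf.smul_left _ _ (rf.add_mem (hwF k) (hwF l)) _ hmidF, hmid,
        rf.smul_right' _ (rf.add_mem (hwF k) (hwF l)) (rf.add_mem (hwF k) (hwF l)),
        rf.E_self_expand (hwF k) (hwF l)]
      ring
    have hEdiff : rf.E (w k - w l) (w k - w l) = rf.E (w k) (w k)
        - 2 * rf.E (w k) (w l) + rf.E (w l) (w l) := rf.E_sub_expand (hwF k) (hwF l)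
    have hk := hwQ k
    have hl := hwQ l
    have hQk : Q (w k) = rf.E (w k) (w k) - 2 * lam (w k) := rfl
    have hQl : Q (w l) = rf.E (w l) (w l) - 2 * lam (w l) := rfl
    have hQm : Q mid = rf.E mid mid - 2 * lam mid := rfl
    rw [hQm, hEmid, hlammid] at hQmid
    rw [hQk] at hk
    rw [hQl] at hl
    rw [hEdiff]
    have e1 : 2 / ((k:ℝ) + 1) = 2 * (1 / ((k:ℝ) + 1)) := by ring
    have e2 : 2 / ((l:ℝ) + 1) = 2 * (1 / ((l:ℝ) + 1)) := by ring
    rw [e1, e2]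
    linarith
  have hcauchy : ∀ ε : ℝ, 0 < ε → ∃ N : ℕ, ∀ p ≥ N, ∀ q ≥ N,
      rf.E (w p - w q) (w p - w q) < ε := by
    intro ε hε
    obtain ⟨N, hN⟩ := exists_nat_gt (4 / ε)
    have hN1 : (0:ℝ) < (N:ℝ) + 1 := by positivity
    refine ⟨N, fun p hp q hq => lt_of_le_of_lt (hpar p q) ?_⟩
    have hNe : 4 / ((N:ℝ) + 1) < ε := by
      rw [div_lt_iff₀ hN1]
      rw [div_lt_iff₀ hε] at hN
      nlinarith [hε]
    have hcp : ((N:ℝ) + 1) ≤ ((p:ℝ) + 1) := by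
      have : (N:ℝ) ≤ (p:ℝ) := Nat.cast_le.2 hp
      linarith
    have hcq : ((N:ℝ) + 1) ≤ ((q:ℝ) + 1) := by
      have : (N:ℝ) ≤ (q:ℝ) := Nat.cast_le.2 hq
      linarith
    have h1 : 2 / ((p:ℝ) + 1) ≤ 2 / ((N:ℝ) + 1) :=
      div_le_div_of_nonneg_left (by norm_num) hN1 hcp
    have h2 : 2 / ((q:ℝ) + 1) ≤ 2 / ((N:ℝ) + 1) :=
      div_le_div_of_nonneg_left (by norm_num) hN1 hcq
    have heq : 2 / ((N:ℝ) + 1) + 2 / ((N:ℝ) + 1) = 4 / ((N:ℝ) + 1) := by ring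
    linarith
  obtain ⟨g, hgF, hgconv⟩ := rf.complete w hwF hcauchy
  have hglim : Tendsto (fun n => rf.E (g - w n) (g - w n)) atTop (𝓝 0) :=
    RFtendsto_nonneg_of_eps (fun n => rf.nonneg _ (rf.sub_mem' hgF (hwF n))) hgconv
  have hlamlim : Tendsto (fun n => lam (w n)) atTop (𝓝 (lam g)) := by
    have hb : ∀ n, |lam (w n) - lam g| ≤ Real.sqrt C * rf.en (g - w n) := by
      intro n
      have h1 : lam (w n) - lam g = -(lam (g - w n)) := by
        rw [hlsub g hgF (w n) (hwF n)] ; ring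
      rw [h1, abs_neg]
      have h2 := hbd (g - w n) (rf.sub_mem' hgF (hwF n))
      have h3 : |lam (g - w n)| = Real.sqrt ((lam (g - w n)) ^ 2) := by
        rw [Real.sqrt_sq_eq_abs]
      rw [h3]
      calc Real.sqrt ((lam (g - w n)) ^ 2)
          ≤ Real.sqrt (C * rf.E (g - w n) (g - w n)) := Real.sqrt_le_sqrt h2
      _ = Real.sqrt C * rf.en (g - w n) := by
          rw [Real.sqrt_mul hC] ; rfl
    have ht : Tendsto (fun n => rf.en (g - w n)) atTop (𝓝 0) := by
      have := (Real.continuous_sqrt.tendsto 0).comp hglim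
      simpa [ResistanceForm.en, Real.sqrt_zero, Function.comp_def] using this
    have hb2 : Tendsto (fun n => Real.sqrt C * rf.en (g - w n)) atTop (𝓝 0) := by
      simpa using (tendsto_const_nhds (x := Real.sqrt C)).mul ht
    have hb' : ∀ n, ‖lam (w n) - lam g‖ ≤ Real.sqrt C * rf.en (g - w n) := by
      simpa [Real.norm_eq_abs] using hb
    have hsq := squeeze_zero_norm hb' hb2
    have h2 := hsq.add (tendsto_const_nhds (x := lam g))
    simpa using h2
  have hElim : Tendsto (fun n => rf.E (w n) (w n)) atTop (𝓝 (rf.E g g)) :=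
    rf.tendsto_E_self_of_E_sub hgF hwF hglim
  have hQlim : Tendsto (fun n => Q (w n)) atTop (𝓝 (Q g)) :=
    hElim.sub (hlamlim.const_mul 2)
  have hmlim : Tendsto (fun n : ℕ => m + 1 / ((n:ℝ) + 1)) atTop (𝓝 m) := by
    have := (tendsto_const_nhds (x := m)).add RFone_div_tendsto
    simpa using this
  have hQg : Q g ≤ m :=
    le_of_tendsto_of_tendsto' hQlim hmlim (fun n => le_of_lt (hwQ n))
  have hvar : ∀ h ∈ rf.F, rf.E g h = lam h := by
    intro h hh
    have key : ∀ t : ℝ, 0 ≤ rf.E h h * t ^ 2 + 2 * (rf.E g h - lam h) * t := by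
      intro t
      have hmem : g + t • h ∈ rf.F := rf.add_mem hgF (rf.smul_mem t hh)
      have h1 : m ≤ Q (g + t • h) := hmemQ _ hmem
      have hE : rf.E (g + t • h) (g + t • h)
          = rf.E g g + 2 * (t * rf.E g h) + t * (t * rf.E h h) := by
        rw [rf.E_self_expand hgF (rf.smul_mem t hh), rf.smul_right' t hgF hh,
          rf.smul_left t h hh _ (rf.smul_mem t hh), rf.smul_right' t hh hh]
      have hl : lam (g + t • h) = lam g + t * lam h := by
        rw [hladd g hgF _ (rf.smul_mem t hh), hlsmul t h hh]
      have hexp : Q (g + t • h) = rf.E (g + t • h) (g + t • h) - 2 * lam (g + t • h) := rfl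
      have hQgdef : Q g = rf.E g g - 2 * lam g := rfl
      rw [hexp, hE, hl] at h1
      rw [hQgdef] at hQg
      nlinarith [h1, hQg]
    have hz := RFquad_zero (rf.nonneg h hh) key
    linarith
  refine ⟨g, hgF, hvar, ?_⟩
  have hEg : rf.E g g = lam g := hvar g hgF
  have hb := hbd g hgF
  rw [← hEg] at hb
  rcases (rf.nonneg g hgF).eq_or_lt with h0 | hpos
  · rw [← h0] ; exact hC
  · nlinarith

end ResistanceForm
end Variational
section Variational2

variable {X : Type*} [MetricSpace X] (rf : ResistanceForm X)
  (hR : ∀ x y : X, dist x y = rf.rmetric x y)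

set_option linter.unusedSectionVars false

namespace ResistanceForm

lemma E_sub_comm {a b : X → ℝ} (ha : a ∈ rf.F) (hb : b ∈ rf.F) :
    rf.E (a - b) (a - b) = rf.E (b - a) (b - a) := by
  rw [rf.E_sub_expand ha hb, rf.E_sub_expand hb ha, rf.symm a ha b hb]
  ring

include hR in
/-- Riesz representer of the point-difference functional. -/
lemma representer (x y : X) :
    ∃ g ∈ rf.F, (∀ h ∈ rf.F, rf.E g h = h x - h y) := by
  obtain ⟨g, hg, hrep, _⟩ := rf.riesz (fun w => w x - w y)
    (fun u hu v hv => by simp [Pi.add_apply] ; ring)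
    (fun c u hu => by simp [Pi.smul_apply, smul_eq_mul] ; ring)
    (dist_nonneg (x := x) (y := y))
    (fun w hw => by
      have := rf.holder hR hw x y
      calc (w x - w y) ^ 2 ≤ rf.E w w * dist x y := this
      _ = dist x y * rf.E w w := mul_comm _ _)
  exact ⟨g, hg, hrep⟩

/-- Projection onto (the closure of) a convex cone `V`: orthogonality. -/
lemma proj (V : Set (X → ℝ)) (hVF : V ⊆ rf.F) (hVne : V.Nonempty)
    (hVadd : ∀ f ∈ V, ∀ g ∈ V, f + g ∈ V) (hVsmul : ∀ (c : ℝ), ∀ f ∈ V, c • f ∈ V)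
    {h : X → ℝ} (hh : h ∈ rf.F) :
    ∃ fs ∈ rf.F, (∀ ε : ℝ, 0 < ε → ∃ f ∈ V, rf.E (fs - f) (fs - f) < ε) ∧
      (∀ g ∈ V, rf.E (h - fs) g = 0) := by
  classical
  set S : Set ℝ := {e | ∃ f ∈ V, rf.E (h - f) (h - f) = e} with hS
  obtain ⟨f₀, hf₀⟩ := hVne
  have hSne : S.Nonempty := ⟨_, f₀, hf₀, rfl⟩
  have hSbdd : BddBelow S :=
    ⟨0, fun e ⟨f, hf, hEf⟩ => hEf ▸ rf.nonneg _ (rf.sub_mem' hh (hVF hf))⟩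
  set d := sInf S with hd
  have hdle : ∀ f ∈ V, d ≤ rf.E (h - f) (h - f) := fun f hf => csInf_le hSbdd ⟨f, hf, rfl⟩
  have hfk : ∀ k : ℕ, ∃ f ∈ V, rf.E (h - f) (h - f) < d + 1 / (k + 1) := by
    intro k
    have hlt : d < d + 1 / ((k:ℝ) + 1) := by
      have : (0:ℝ) < 1 / ((k:ℝ) + 1) := by positivity
      linarith
    obtain ⟨e, ⟨f, hf, hEf⟩, helt⟩ := exists_lt_of_csInf_lt hSne hlt
    exact ⟨f, hf, hEf ▸ helt⟩
  choose f hfV hfE using hfk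
  have hfF : ∀ k, f k ∈ rf.F := fun k => hVF (hfV k)
  have hpar : ∀ k l : ℕ, rf.E (f k - f l) (f k - f l)
      ≤ 2 * (1 / ((k:ℝ) + 1)) + 2 * (1 / ((l:ℝ) + 1)) := by
    intro k l
    set mid := (1/2 : ℝ) • (f k + f l) with hmid
    have hmidV : mid ∈ V := hVsmul _ _ (hVadd _ (hfV k) _ (hfV l))
    have hmidF : mid ∈ rf.F := hVF hmidV
    have hdm := hdle mid hmidV
    have hEmid : rf.E (h - mid) (h - mid) = rf.E h h - (rf.E h (f k) + rf.E h (f l))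
        + (1/4) * (rf.E (f k) (f k) + 2 * rf.E (f k) (f l) + rf.E (f l) (f l)) := by
      rw [rf.E_sub_expand hh hmidF, hmid,
        rf.smul_right' _ hh (rf.add_mem (hfF k) (hfF l)),
        rf.add_right' hh (hfF k) (hfF l),
        rf.smul_left _ _ (rf.add_mem (hfF k) (hfF l)) _
          (rf.smul_mem _ (rf.add_mem (hfF k) (hfF l))),
        rf.smul_right' _ (rf.add_mem (hfF k) (hfF l)) (rf.add_mem (hfF k) (hfF l)),
        rf.E_self_expand (hfF k) (hfF l)]
      ring
    have hEk : rf.E (h - f k) (h - f k)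
        = rf.E h h - 2 * rf.E h (f k) + rf.E (f k) (f k) := rf.E_sub_expand hh (hfF k)
    have hEl : rf.E (h - f l) (h - f l)
        = rf.E h h - 2 * rf.E h (f l) + rf.E (f l) (f l) := rf.E_sub_expand hh (hfF l)
    have hEkl : rf.E (f k - f l) (f k - f l)
        = rf.E (f k) (f k) - 2 * rf.E (f k) (f l) + rf.E (f l) (f l) :=
      rf.E_sub_expand (hfF k) (hfF l)
    have h1 := hfE k
    have h2 := hfE l
    rw [hEk] at h1
    rw [hEl] at h2
    rw [hEmid] at hdm
    rw [hEkl]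
    linarith
  have hcauchy : ∀ ε : ℝ, 0 < ε → ∃ N : ℕ, ∀ p ≥ N, ∀ q ≥ N,
      rf.E (f p - f q) (f p - f q) < ε := by
    intro ε hε
    obtain ⟨N, hN⟩ := exists_nat_gt (4 / ε)
    have hN1 : (0:ℝ) < (N:ℝ) + 1 := by positivity
    refine ⟨N, fun p hp q hq => lt_of_le_of_lt (hpar p q) ?_⟩
    have hNe : 4 / ((N:ℝ) + 1) < ε := by
      rw [div_lt_iff₀ hN1]
      rw [div_lt_iff₀ hε] at hN
      nlinarith [hε]
    have hcp : ((N:ℝ) + 1) ≤ ((p:ℝ) + 1) := by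
      have : (N:ℝ) ≤ (p:ℝ) := Nat.cast_le.2 hp
      linarith
    have hcq : ((N:ℝ) + 1) ≤ ((q:ℝ) + 1) := by
      have : (N:ℝ) ≤ (q:ℝ) := Nat.cast_le.2 hq
      linarith
    have h1 : 1 / ((p:ℝ) + 1) ≤ 1 / ((N:ℝ) + 1) :=
      div_le_div_of_nonneg_left (by norm_num) hN1 hcp
    have h2 : 1 / ((q:ℝ) + 1) ≤ 1 / ((N:ℝ) + 1) :=
      div_le_div_of_nonneg_left (by norm_num) hN1 hcq
    have heq : 2 * (1 / ((N:ℝ) + 1)) + 2 * (1 / ((N:ℝ) + 1)) = 4 / ((N:ℝ) + 1) := by ring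
    linarith
  obtain ⟨fs, hfsF, hfsconv⟩ := rf.complete f hfF hcauchy
  have hfslim : Tendsto (fun n => rf.E (fs - f n) (fs - f n)) atTop (𝓝 0) :=
    RFtendsto_nonneg_of_eps (fun n => rf.nonneg _ (rf.sub_mem' hfsF (hfF n))) hfsconv
  have hfslim' : Tendsto (fun n => rf.E (f n - fs) (f n - fs)) atTop (𝓝 0) := by
    have heqq : (fun n => rf.E (f n - fs) (f n - fs))
        = fun n => rf.E (fs - f n) (fs - f n) := by
      funext n ; exact rf.E_sub_comm (hfF n) hfsF
    rw [heqq] ; exact hfslim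
  refine ⟨fs, hfsF, ?_, ?_⟩
  · intro ε hε
    obtain ⟨N, hN⟩ := hfsconv ε hε
    exact ⟨f N, hfV N, hN N le_rfl⟩
  · intro g hgV
    have hgF := hVF hgV
    -- E(h - fs) = d
    have hdiffF : h - fs ∈ rf.F := rf.sub_mem' hh hfsF
    have hlim1 : Tendsto (fun n => rf.E (h - f n) (h - f n)) atTop
        (𝓝 (rf.E (h - fs) (h - fs))) := by
      apply rf.tendsto_E_self_of_E_sub hdiffF (fun n => rf.sub_mem' hh (hfF n))
      have heq : ∀ n, (h - fs) - (h - f n) = f n - fs := by intro n ; funext z ; simp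
      simpa using hfslim'
    have hge : d ≤ rf.E (h - fs) (h - fs) :=
      ge_of_tendsto hlim1 (Filter.Eventually.of_forall fun n => hdle _ (hfV n))
    have hmlim : Tendsto (fun n : ℕ => d + 1 / ((n:ℝ) + 1)) atTop (𝓝 d) := by
      have := (tendsto_const_nhds (x := d)).add RFone_div_tendsto
      simpa using this
    have hle : rf.E (h - fs) (h - fs) ≤ d :=
      le_of_tendsto_of_tendsto' hlim1 hmlim (fun n => le_of_lt (hfE n))
    -- first variation
    have key : ∀ t : ℝ, 0 ≤ rf.E g g * t ^ 2 + 2 * (-(rf.E (h - fs) g)) * t := by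
      intro t
      have htgF : t • g ∈ rf.F := rf.smul_mem t hgF
      have hwtF : (h - fs) - t • g ∈ rf.F := rf.sub_mem' hdiffF htgF
      have hwnF : ∀ n, (h - f n) - t • g ∈ rf.F :=
        fun n => rf.sub_mem' (rf.sub_mem' hh (hfF n)) htgF
      have hlim2 : Tendsto (fun n => rf.E ((h - f n) - t • g) ((h - f n) - t • g))
          atTop (𝓝 (rf.E ((h - fs) - t • g) ((h - fs) - t • g))) := by
        apply rf.tendsto_E_self_of_E_sub hwtF hwnF
        have heq : ∀ n, ((h - fs) - t • g) - ((h - f n) - t • g) = f n - fs := by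
          intro n ; funext z ; simp
        simpa using hfslim'
      have hmemn : ∀ n, d ≤ rf.E ((h - f n) - t • g) ((h - f n) - t • g) := by
        intro n
        have hVmem : f n + t • g ∈ V := hVadd _ (hfV n) _ (hVsmul t _ hgV)
        have heq : (h - f n) - t • g = h - (f n + t • g) := by funext z ; simp ; ring
        rw [heq]
        exact hdle _ hVmem
      have hge2 : d ≤ rf.E ((h - fs) - t • g) ((h - fs) - t • g) :=
        ge_of_tendsto hlim2 (Filter.Eventually.of_forall hmemn)
      have hexp : rf.E ((h - fs) - t • g) ((h - fs) - t • g)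
          = rf.E (h - fs) (h - fs) - 2 * (t * rf.E (h - fs) g) + t * (t * rf.E g g) := by
        rw [rf.E_sub_expand hdiffF htgF, rf.smul_right' t hdiffF hgF,
          rf.smul_left t g hgF _ htgF, rf.smul_right' t hgF hgF]
      rw [hexp] at hge2
      nlinarith [hge2, hle]
    have := RFquad_zero (rf.nonneg g hgF) key
    linarith

end ResistanceForm
end Variational2
section Closure

variable {X : Type*} [MetricSpace X] (rf : ResistanceForm X)
  (hR : ∀ x y : X, dist x y = rf.rmetric x y)

set_option linter.unusedSectionVars false

namespace ResistanceForm

include hR in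
/-- Weak closure: bounded-energy pointwise limits stay in `F`, with energy bound and
weak convergence of inner products. -/
lemma weak_closure {v : ℕ → X → ℝ} (hvF : ∀ m, v m ∈ rf.F) {C : ℝ} (hC : 0 ≤ C)
    (hbd : ∀ m, rf.E (v m) (v m) ≤ C) {vl : X → ℝ}
    (hpt : ∀ x : X, Tendsto (fun m => v m x) atTop (𝓝 (vl x))) :
    vl ∈ rf.F ∧ rf.E vl vl ≤ C ∧
      ∀ h ∈ rf.F, Tendsto (fun m => rf.E h (v m)) atTop (𝓝 (rf.E h vl)) := by
  classical
  set V : Set (X → ℝ) :=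
    {f | f ∈ rf.F ∧ ∃ L, Tendsto (fun m => rf.E f (v m)) atTop (𝓝 L)} with hV
  have hVF : V ⊆ rf.F := fun f hf => hf.1
  have hVne : V.Nonempty := by
    refine ⟨0, rf.zero_mem, 0, ?_⟩
    have : (fun m => rf.E 0 (v m)) = fun _ => (0:ℝ) := by
      funext m ; exact rf.E_zero_left' (hvF m)
    rw [this] ; exact tendsto_const_nhds
  have hVadd : ∀ f ∈ V, ∀ g ∈ V, f + g ∈ V := by
    rintro f ⟨hfF, Lf, hLf⟩ g ⟨hgF, Lg, hLg⟩
    refine ⟨rf.add_mem hfF hgF, Lf + Lg, ?_⟩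
    have : (fun m => rf.E (f + g) (v m)) = fun m => rf.E f (v m) + rf.E g (v m) := by
      funext m ; exact rf.add_left f hfF g hgF (v m) (hvF m)
    rw [this] ; exact hLf.add hLg
  have hVsmul : ∀ (c : ℝ), ∀ f ∈ V, c • f ∈ V := by
    rintro c f ⟨hfF, Lf, hLf⟩
    refine ⟨rf.smul_mem c hfF, c * Lf, ?_⟩
    have : (fun m => rf.E (c • f) (v m)) = fun m => c * rf.E f (v m) := by
      funext m ; exact rf.smul_left c f hfF (v m) (hvF m)
    rw [this] ; exact hLf.const_mul c
  have hrepV : ∀ x y : X, ∃ r ∈ V, ∀ h ∈ rf.F, rf.E r h = h x - h y := by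
    intro x y
    obtain ⟨r, hrF, hrrep⟩ := rf.representer hR x y
    refine ⟨r, ⟨hrF, vl x - vl y, ?_⟩, hrrep⟩
    have : (fun m => rf.E r (v m)) = fun m => v m x - v m y := by
      funext m ; exact hrrep (v m) (hvF m)
    rw [this] ; exact (hpt x).sub (hpt y)
  -- every element of F has a limit of inner products
  have step_all : ∀ h ∈ rf.F, ∃ L, Tendsto (fun m => rf.E h (v m)) atTop (𝓝 L) := by
    intro h hh
    obtain ⟨fs, hfsF, happrox, horth⟩ := rf.proj V hVF hVne hVadd hVsmul hh
    have hdF : h - fs ∈ rf.F := rf.sub_mem' hh hfsF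
    have hconstd : ∀ x y : X, (h - fs) x = (h - fs) y := by
      intro x y
      obtain ⟨r, hrV, hrrep⟩ := hrepV x y
      have h0 := horth r hrV
      have h1 := hrrep (h - fs) hdF
      rw [rf.symm r (hVF hrV) (h - fs) hdF, h0] at h1
      linarith
    have hEeq : ∀ m, rf.E h (v m) = rf.E fs (v m) := by
      intro m
      have hcc : ∃ c : ℝ, (h - fs) = fun _ => c := by
        cases isEmpty_or_nonempty X with
        | inl hemp => exact ⟨0, funext fun x => (hemp.false x).elim⟩
        | inr hne =>
          obtain ⟨x₀⟩ := hne
          exact ⟨(h - fs) x₀, funext fun z => hconstd z x₀⟩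
      obtain ⟨c, hc⟩ := hcc
      have h2 : rf.E h (v m) - rf.E fs (v m) = rf.E (h - fs) (v m) :=
        (rf.sub_left' hh hfsF (hvF m)).symm
      rw [hc, rf.E_const_left c (hvF m)] at h2
      linarith
    have hcs : CauchySeq (fun m => rf.E fs (v m)) := by
      rw [Metric.cauchySeq_iff]
      intro ε hε
      have hC1 : (0:ℝ) < Real.sqrt C + 1 := by positivity
      set δ := (ε / (3 * (Real.sqrt C + 1))) ^ 2 with hδ
      have hδpos : 0 < δ := by positivity
      obtain ⟨f, hfV, hfclose⟩ := happrox δ hδpos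
      obtain ⟨L, hfL⟩ := hfV.2
      have hfc := hfL.cauchySeq
      rw [Metric.cauchySeq_iff] at hfc
      obtain ⟨N, hN⟩ := hfc (ε/3) (by positivity)
      refine ⟨N, fun p hp q hq => ?_⟩
      have hkey : ∀ m, |rf.E fs (v m) - rf.E f (v m)| ≤ ε/3 := by
        intro m
        have h1 : rf.E fs (v m) - rf.E f (v m) = rf.E (fs - f) (v m) :=
          (rf.sub_left' hfsF (hVF hfV) (hvF m)).symm
        rw [h1]
        have h2 := rf.abs_E_le (rf.sub_mem' hfsF (hVF hfV)) (hvF m)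
        have h3 : rf.en (fs - f) ≤ ε / (3 * (Real.sqrt C + 1)) := by
          have hs := Real.sqrt_le_sqrt (le_of_lt hfclose)
          calc rf.en (fs - f) ≤ Real.sqrt δ := hs
          _ = ε / (3 * (Real.sqrt C + 1)) := by
              rw [hδ, Real.sqrt_sq (by positivity)]
        have h4 : rf.en (v m) ≤ Real.sqrt C := Real.sqrt_le_sqrt (hbd m)
        have h5 : |rf.E (fs - f) (v m)| ≤ (ε / (3 * (Real.sqrt C + 1))) * Real.sqrt C := by
          calc |rf.E (fs - f) (v m)| ≤ rf.en (fs - f) * rf.en (v m) := h2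
          _ ≤ (ε / (3 * (Real.sqrt C + 1))) * Real.sqrt C :=
              mul_le_mul h3 h4 (rf.en_nonneg _) (by positivity)
        refine le_trans h5 ?_
        rw [div_mul_eq_mul_div, div_le_iff₀ (by positivity)]
        nlinarith [Real.sqrt_nonneg C, hε]
      have hmid := hN p hp q hq
      rw [Real.dist_eq] at hmid ⊢
      have hkp := hkey p
      have hkq := hkey q
      have htri : |rf.E fs (v p) - rf.E fs (v q)| ≤
          |rf.E fs (v p) - rf.E f (v p)| + |rf.E f (v p) - rf.E f (v q)|
            + |rf.E f (v q) - rf.E fs (v q)| := by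
        calc |rf.E fs (v p) - rf.E fs (v q)|
            ≤ |rf.E fs (v p) - rf.E f (v p)| + |rf.E f (v p) - rf.E fs (v q)| :=
              abs_sub_le _ _ _
        _ ≤ |rf.E fs (v p) - rf.E f (v p)|
            + (|rf.E f (v p) - rf.E f (v q)| + |rf.E f (v q) - rf.E fs (v q)|) := by
              linarith [abs_sub_le (rf.E f (v p)) (rf.E f (v q)) (rf.E fs (v q))]
        _ = _ := by ring
      have habs : |rf.E f (v q) - rf.E fs (v q)| = |rf.E fs (v q) - rf.E f (v q)| :=
        abs_sub_comm _ _
      rw [habs] at htri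
      linarith
    obtain ⟨L, hL⟩ := cauchySeq_tendsto_of_complete hcs
    refine ⟨L, ?_⟩
    have : (fun m => rf.E h (v m)) = fun m => rf.E fs (v m) := funext hEeq
    rw [this] ; exact hL
  -- the limiting functional
  set lam : (X → ℝ) → ℝ := fun h =>
    if hh : h ∈ rf.F then Classical.choose (step_all h hh) else 0 with hlam
  have hlamT : ∀ h (hh : h ∈ rf.F),
      Tendsto (fun m => rf.E h (v m)) atTop (𝓝 (lam h)) := by
    intro h hh
    have : lam h = Classical.choose (step_all h hh) := by rw [hlam] ; simp [hh]
    rw [this]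
    exact Classical.choose_spec (step_all h hh)
  have hladd : ∀ u ∈ rf.F, ∀ w ∈ rf.F, lam (u + w) = lam u + lam w := by
    intro u hu w hw
    have h1 := hlamT (u + w) (rf.add_mem hu hw)
    have h2 := (hlamT u hu).add (hlamT w hw)
    have he : (fun m => rf.E (u + w) (v m)) = fun m => rf.E u (v m) + rf.E w (v m) := by
      funext m ; exact rf.add_left u hu w hw (v m) (hvF m)
    rw [he] at h1
    exact tendsto_nhds_unique h1 h2
  have hlsmul : ∀ (c : ℝ), ∀ u ∈ rf.F, lam (c • u) = c * lam u := by
    intro c u hu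
    have h1 := hlamT (c • u) (rf.smul_mem c hu)
    have h2 := (hlamT u hu).const_mul c
    have he : (fun m => rf.E (c • u) (v m)) = fun m => c * rf.E u (v m) := by
      funext m ; exact rf.smul_left c u hu (v m) (hvF m)
    rw [he] at h1
    exact tendsto_nhds_unique h1 h2
  have hlbd : ∀ w ∈ rf.F, (lam w) ^ 2 ≤ C * rf.E w w := by
    intro w hw
    have habs : |lam w| ≤ rf.en w * Real.sqrt C := by
      have h1 : Tendsto (fun m => |rf.E w (v m)|) atTop (𝓝 |lam w|) :=
        (continuous_abs.tendsto _).comp (hlamT w hw)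
      refine le_of_tendsto h1 (Filter.Eventually.of_forall fun m => ?_)
      have h2 := rf.abs_E_le hw (hvF m)
      have h4 : rf.en (v m) ≤ Real.sqrt C := Real.sqrt_le_sqrt (hbd m)
      calc |rf.E w (v m)| ≤ rf.en w * rf.en (v m) := h2
      _ ≤ rf.en w * Real.sqrt C := mul_le_mul_of_nonneg_left h4 (rf.en_nonneg _)
    have h5 : (lam w) ^ 2 ≤ (rf.en w * Real.sqrt C) ^ 2 := by
      rw [← sq_abs]
      exact pow_le_pow_left₀ (abs_nonneg _) habs 2
    calc (lam w) ^ 2 ≤ (rf.en w * Real.sqrt C) ^ 2 := h5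
    _ = rf.E w w * (Real.sqrt C)^2 := by rw [mul_pow, rf.en_sq hw]
    _ = C * rf.E w w := by rw [Real.sq_sqrt hC] ; ring
  obtain ⟨g, hgF, hgrep, hgE⟩ := rf.riesz lam hladd hlsmul hC hlbd
  have hxy : ∀ x y : X, g x - g y = vl x - vl y := by
    intro x y
    obtain ⟨r, hrV, hrrep⟩ := hrepV x y
    have h1 : lam r = vl x - vl y := by
      have h2 := hlamT r (hVF hrV)
      have he : (fun m => rf.E r (v m)) = fun m => v m x - v m y := by
        funext m ; exact hrrep (v m) (hvF m)
      rw [he] at h2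
      exact tendsto_nhds_unique h2 ((hpt x).sub (hpt y))
    have h3 : rf.E g r = lam r := hgrep r (hVF hrV)
    rw [rf.symm g hgF r (hVF hrV), hrrep g hgF] at h3
    rw [h1] at h3
    exact h3
  have hcc : ∃ c : ℝ, vl = g + fun _ => c := by
    cases isEmpty_or_nonempty X with
    | inl hemp => exact ⟨0, funext fun x => (hemp.false x).elim⟩
    | inr hne =>
      obtain ⟨x₀⟩ := hne
      refine ⟨vl x₀ - g x₀, funext fun z => ?_⟩
      have := hxy z x₀
      simp only [Pi.add_apply]
      linarith
  obtain ⟨c, hc⟩ := hcc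
  have hvlF : vl ∈ rf.F := hc ▸ rf.add_mem hgF (rf.const_mem c)
  have hEvl : rf.E vl vl = rf.E g g := by
    rw [hc, rf.E_self_expand hgF (rf.const_mem c), rf.E_const_right c hgF,
      rf.E_const_self]
    ring
  refine ⟨hvlF, by rw [hEvl] ; exact hgE, ?_⟩
  intro h hh
  have h1 := hlamT h hh
  have h2 : lam h = rf.E h vl := by
    rw [hc, rf.add_right' hh hgF (rf.const_mem c), rf.E_const_right c hh,
      rf.symm h hh g hgF, hgrep h hh]
    ring
  rw [← h2] ; exact h1

end ResistanceForm
end Closure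
section Lattice

variable {X : Type*} [MetricSpace X] (rf : ResistanceForm X)
  (hR : ∀ x y : X, dist x y = rf.rmetric x y)

set_option linter.unusedSectionVars false

namespace ResistanceForm

include hR in
lemma posPart_mem {f : X → ℝ} (hf : f ∈ rf.F) :
    (fun x => max (f x) 0) ∈ rf.F ∧
      rf.E (fun x => max (f x) 0) (fun x => max (f x) 0) ≤ rf.E f f := by
  classical
  set v : ℕ → X → ℝ := fun m => ((m:ℝ) + 1) • (fun x =>
    max 0 (min 1 ((((m:ℝ) + 1)⁻¹ • f) x))) with hv
  have hm1 : ∀ m : ℕ, (0:ℝ) < (m:ℝ) + 1 := fun m => by positivity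
  have hvF : ∀ m, v m ∈ rf.F := by
    intro m
    exact rf.smul_mem _ (rf.clamp_mem (rf.smul_mem _ hf))
  have hbd : ∀ m, rf.E (v m) (v m) ≤ rf.E f f := by
    intro m
    have hc := (rf.markov _ (rf.smul_mem (((m:ℝ) + 1)⁻¹) hf)).2
    have hcm := rf.clamp_mem (rf.smul_mem (((m:ℝ) + 1)⁻¹) hf)
    have h1 : rf.E (v m) (v m) = (((m:ℝ)+1) * ((m:ℝ)+1)) *
        rf.E (fun x => max 0 (min 1 ((((m:ℝ) + 1)⁻¹ • f) x)))
          (fun x => max 0 (min 1 ((((m:ℝ) + 1)⁻¹ • f) x))) := by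
      rw [hv]
      rw [rf.smul_left _ _ hcm _ (rf.smul_mem _ hcm), rf.smul_right' _ hcm hcm]
      ring
    have h2 : rf.E (((m:ℝ) + 1)⁻¹ • f) (((m:ℝ) + 1)⁻¹ • f)
        = (((m:ℝ)+1)⁻¹ * ((m:ℝ)+1)⁻¹) * rf.E f f := by
      rw [rf.smul_left _ _ hf _ (rf.smul_mem _ hf), rf.smul_right' _ hf hf]
      ring
    rw [h1]
    calc (((m:ℝ)+1) * ((m:ℝ)+1)) * rf.E _ _
        ≤ (((m:ℝ)+1) * ((m:ℝ)+1)) * ((((m:ℝ)+1)⁻¹ * ((m:ℝ)+1)⁻¹) * rf.E f f) := by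
          rw [← h2]
          exact mul_le_mul_of_nonneg_left hc (by positivity)
    _ = rf.E f f := by
        field_simp
  have hpt : ∀ x : X, Tendsto (fun m => v m x) atTop (𝓝 (max (f x) 0)) := by
    intro x
    have hev : ∀ᶠ m in atTop, v m x = max (f x) 0 := by
      rw [Filter.eventually_atTop]
      refine ⟨Nat.ceil (f x), fun m hm => ?_⟩
      have hfx : f x ≤ (m:ℝ) + 1 := by
        calc f x ≤ (Nat.ceil (f x) : ℝ) := Nat.le_ceil _
        _ ≤ (m:ℝ) := Nat.cast_le.2 hm
        _ ≤ (m:ℝ) + 1 := by linarith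
      have hmx := hm1 m
      rw [hv]
      simp only [Pi.smul_apply, smul_eq_mul]
      rcases le_or_gt (f x) 0 with hneg | hpos
      · have h1 : ((m:ℝ)+1)⁻¹ * f x ≤ 0 := by
          apply mul_nonpos_of_nonneg_of_nonpos (le_of_lt (inv_pos.2 hmx)) hneg
        have h2 : min 1 (((m:ℝ)+1)⁻¹ * f x) = ((m:ℝ)+1)⁻¹ * f x := by
          apply min_eq_right ; linarith
        rw [h2, max_eq_left h1, max_eq_right hneg, mul_zero]
      · have h1 : ((m:ℝ)+1)⁻¹ * f x ≤ 1 := by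
          rw [inv_mul_le_iff₀ hmx] ; linarith
        have h1' : 0 ≤ ((m:ℝ)+1)⁻¹ * f x := by positivity
        rw [min_eq_right h1, max_eq_right h1', max_eq_left (le_of_lt hpos)]
        field_simp
    exact Filter.Tendsto.congr' (hev.mono fun m hm => hm.symm) tendsto_const_nhds
  have := rf.weak_closure hR hvF (rf.nonneg f hf) hbd hpt
  exact ⟨this.1, this.2.1⟩

include hR in
lemma E_posPart_negPart {f : X → ℝ} (hf : f ∈ rf.F) :
    rf.E (fun x => max (f x) 0) (fun x => max (-f x) 0) ≤ 0 := by
  classical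
  set fp : X → ℝ := fun x => max (f x) 0 with hfp
  set fm : X → ℝ := fun x => max (-f x) 0 with hfm
  obtain ⟨hfpF, _⟩ := rf.posPart_mem hR hf
  have hfmeq : fm = fp - f := by
    funext z
    show max (-f z) 0 = max (f z) 0 - f z
    rcases le_or_gt 0 (f z) with h | h
    · rw [max_eq_right (neg_nonpos.2 h), max_eq_left h] ; ring
    · rw [max_eq_left (by linarith : (0:ℝ) ≤ -f z), max_eq_right h.le] ; ring
  have hfmF : fm ∈ rf.F := hfmeq ▸ rf.sub_mem' hfpF hf
  set A := rf.E fm fm with hA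
  have hA0 : 0 ≤ A := rf.nonneg fm hfmF
  set b := rf.E fp fm with hb
  have key : ∀ s : ℝ, 0 < s → 2 * s * b ≤ s ^ 2 * A := by
    intro s hs
    set q : X → ℝ := fp - s • fm with hq
    have hqF : q ∈ rf.F := rf.sub_mem' hfpF (rf.smul_mem s hfmF)
    have hqpos : (fun x => max (q x) 0) = fp := by
      funext z
      show max (max (f z) 0 - s * max (-f z) 0) 0 = max (f z) 0
      rcases le_or_gt 0 (f z) with h | h
      · rw [max_eq_right (neg_nonpos.2 h), mul_zero, sub_zero, max_eq_left h,
          max_eq_left h]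
      · rw [max_eq_right h.le, max_eq_left (by linarith : (0:ℝ) ≤ -f z), zero_sub,
          max_eq_right (by nlinarith [mul_pos hs (neg_pos.2 h)] : -(s * -f z) ≤ 0)]
    have hineq := (rf.posPart_mem hR hqF).2
    rw [hqpos] at hineq
    have hexp : rf.E q q = rf.E fp fp - 2 * (s * b) + s * (s * A) := by
      rw [hq, rf.E_sub_expand hfpF (rf.smul_mem s hfmF), rf.smul_right' s hfpF hfmF,
        rf.smul_left s fm hfmF _ (rf.smul_mem s hfmF), rf.smul_right' s hfmF hfmF]
    rw [hexp] at hineq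
    nlinarith
  by_contra hbpos
  push_neg at hbpos
  have hs : (0:ℝ) < b / (A + 1) := div_pos hbpos (by linarith)
  have := key (b / (A + 1)) hs
  have hA1 : (0:ℝ) < A + 1 := by linarith
  rw [div_pow] at this
  have h1 : 2 * (b / (A + 1)) * b = 2 * b ^ 2 / (A + 1) := by ring
  have h2 : b ^ 2 / (A + 1) ^ 2 * A = b ^ 2 * A / (A + 1) ^ 2 := by ring
  rw [h1, h2] at this
  rw [div_le_div_iff₀ hA1 (pow_pos hA1 2)] at this
  nlinarith [sq_nonneg b, hbpos, hA0]

include hR in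
lemma min_max_mem {f g : X → ℝ} (hf : f ∈ rf.F) (hg : g ∈ rf.F) :
    (fun x => min (f x) (g x)) ∈ rf.F ∧ (fun x => max (f x) (g x)) ∈ rf.F ∧
      rf.E (fun x => min (f x) (g x)) (fun x => min (f x) (g x))
        ≤ rf.E f f + rf.E g g ∧
      rf.E (fun x => max (f x) (g x)) (fun x => max (f x) (g x))
        ≤ rf.E f f + rf.E g g := by
  classical
  set w : X → ℝ := f - g with hw
  have hwF : w ∈ rf.F := rf.sub_mem' hf hg
  set wp : X → ℝ := fun x => max (w x) 0 with hwp
  set wm : X → ℝ := fun x => max (-w x) 0 with hwm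
  obtain ⟨hwpF, _⟩ := rf.posPart_mem hR hwF
  have hpn := rf.E_posPart_negPart hR hwF
  have hminq : (fun x => min (f x) (g x)) = f - wp := by
    funext z
    show min (f z) (g z) = f z - max (f z - g z) 0
    rcases le_total (f z) (g z) with h | h
    · rw [min_eq_left h, max_eq_right (by linarith)] ; ring
    · rw [min_eq_right h, max_eq_left (by linarith)] ; ring
  have hmaxq : (fun x => max (f x) (g x)) = g + wp := by
    funext z
    show max (f z) (g z) = g z + max (f z - g z) 0
    rcases le_total (f z) (g z) with h | h
    · rw [max_eq_right h, max_eq_right (by linarith)] ; ring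
    · rw [max_eq_left h, max_eq_left (by linarith)] ; ring
  have hminF : (fun x => min (f x) (g x)) ∈ rf.F := hminq ▸ rf.sub_mem' hf hwpF
  have hmaxF : (fun x => max (f x) (g x)) ∈ rf.F := hmaxq ▸ rf.add_mem hg hwpF
  -- energies
  have hEmin : rf.E (fun x => min (f x) (g x)) (fun x => min (f x) (g x))
      = rf.E f f - 2 * rf.E f wp + rf.E wp wp := by
    rw [hminq] ; exact rf.E_sub_expand hf hwpF
  have hEmax : rf.E (fun x => max (f x) (g x)) (fun x => max (f x) (g x))
      = rf.E g g + 2 * rf.E g wp + rf.E wp wp := by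
    rw [hmaxq] ; exact rf.E_self_expand hg hwpF
  -- wp - w = wm
  have hwmq : wp - w = wm := by
    funext z
    show max (f z - g z) 0 - (f z - g z) = max (-(f z - g z)) 0
    rcases le_total 0 (f z - g z) with h | h
    · rw [max_eq_left h, max_eq_right (by linarith)] ; ring
    · rw [max_eq_right h, max_eq_left (by linarith)] ; ring
  have hwmF : wm ∈ rf.F := hwmq ▸ rf.sub_mem' hwpF hwF
  have hsum : rf.E (fun x => min (f x) (g x)) (fun x => min (f x) (g x))
      + rf.E (fun x => max (f x) (g x)) (fun x => max (f x) (g x))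
      ≤ rf.E f f + rf.E g g := by
    rw [hEmin, hEmax]
    have h1 : rf.E wp wm = rf.E wp wp - rf.E wp w := by
      rw [← hwmq, rf.sub_right' hwpF hwpF hwF]
    have h2 : rf.E wp w = rf.E f wp - rf.E g wp := by
      rw [hw, rf.symm wp hwpF (f - g) (rf.sub_mem' hf hg), rf.sub_left' hf hg hwpF,
        rf.symm f hf wp hwpF, rf.symm g hg wp hwpF]
    have h3 := hpn  -- E wp wm ≤ 0
    rw [h1, h2] at h3
    linarith
  have hEminnn := rf.nonneg _ hminF
  have hEmaxnn := rf.nonneg _ hmaxF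
  exact ⟨hminF, hmaxF, by linarith, by linarith⟩

end ResistanceForm
end Lattice
section Doubling

variable {X : Type*} [MetricSpace X]

lemma RFcover_pow {N : ℕ}
    (hN : ∀ (x : X) (r : ℝ), ∃ s : Finset X, s.card ≤ N ∧
      {y : X | dist x y < 2 * r} ⊆ ⋃ z ∈ s, {y : X | dist z y < r}) :
    ∀ (j : ℕ) (x : X) (r : ℝ), ∃ s : Finset X, s.card ≤ N ^ j ∧
      {y : X | dist x y < 2 ^ j * r} ⊆ ⋃ z ∈ s, {y : X | dist z y < r} := by
  classical
  intro j
  induction j with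
  | zero =>
    intro x r
    refine ⟨{x}, by simp, fun y hy => ?_⟩
    have hy' : y ∈ {y : X | dist x y < r} := by simpa using hy
    exact Set.mem_iUnion₂.2 ⟨x, Finset.mem_singleton_self x, hy'⟩
  | succ j ih =>
    intro x r
    obtain ⟨s₀, hs₀c, hs₀⟩ := hN x (2 ^ j * r)
    choose t htc hts using fun z : X => ih z r
    refine ⟨s₀.biUnion t, ?_, ?_⟩
    · calc (s₀.biUnion t).card ≤ ∑ z ∈ s₀, (t z).card := Finset.card_biUnion_le
      _ ≤ ∑ _z ∈ s₀, N ^ j := Finset.sum_le_sum (fun z _ => htc z)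
      _ = s₀.card * N ^ j := by rw [Finset.sum_const, smul_eq_mul]
      _ ≤ N * N ^ j := Nat.mul_le_mul_right _ hs₀c
      _ = N ^ (j + 1) := by ring
    · intro y hy
      have hy2 : y ∈ {y : X | dist x y < 2 * (2 ^ j * r)} := by
        simp only [Set.mem_setOf_eq] at hy ⊢
        calc dist x y < 2 ^ (j+1) * r := hy
        _ = 2 * (2 ^ j * r) := by ring
      obtain ⟨z, hzs, hzy⟩ := Set.mem_iUnion₂.1 (hs₀ hy2)
      obtain ⟨w, hwt, hwy⟩ := Set.mem_iUnion₂.1 (hts z hzy)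
      exact Set.mem_iUnion₂.2 ⟨w, Finset.mem_biUnion.2 ⟨z, hzs, hwt⟩, hwy⟩

lemma RFtotallyBounded (hdb : DoublingOf (fun x y : X => dist x y))
    (x : X) (R : ℝ) : TotallyBounded {y : X | dist x y < R} := by
  obtain ⟨N, hN⟩ := hdb
  rw [Metric.totallyBounded_iff]
  intro ε hε
  obtain ⟨j, hj⟩ := pow_unbounded_of_one_lt (R / ε) (by norm_num : (1:ℝ) < 2)
  obtain ⟨s, _, hs⟩ := RFcover_pow hN j x ε
  refine ⟨(s : Set X), s.finite_toSet, fun y hy => ?_⟩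
  have hy2 : y ∈ {y : X | dist x y < 2 ^ j * ε} := by
    simp only [Set.mem_setOf_eq] at hy ⊢
    calc dist x y < R := hy
    _ ≤ 2 ^ j * ε := by
        rw [div_lt_iff₀ hε] at hj
        linarith
  obtain ⟨z, hzs, hzy⟩ := Set.mem_iUnion₂.1 (hs hy2)
  exact Set.mem_iUnion₂.2 ⟨z, hzs, by rw [Metric.mem_ball, dist_comm] ; exact hzy⟩

lemma RFproper [CompleteSpace X] (hdb : DoublingOf (fun x y : X => dist x y)) :
    ProperSpace X := by
  constructor
  intro x r
  rw [isCompact_iff_totallyBounded_isComplete]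
  constructor
  · have hsub : Metric.closedBall x r ⊆ {y : X | dist x y < |r| + 1} := by
      intro y hy
      rw [Metric.mem_closedBall] at hy
      simp only [Set.mem_setOf_eq]
      rw [dist_comm]
      calc dist y x ≤ r := hy
      _ ≤ |r| := le_abs_self r
      _ < |r| + 1 := by linarith
    exact TotallyBounded.subset hsub (RFtotallyBounded hdb x _)
  · exact Metric.isClosed_closedBall.isComplete

end Doubling
section MinList

/-- Pointwise minimum of a list of functions, with base `1`. -/
def RFminList {X : Type*} (l : List (X → ℝ)) : X → ℝ :=
  l.foldr (fun f acc => fun x => min (f x) (acc x)) (fun _ => 1)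

variable {X : Type*} [MetricSpace X] (rf : ResistanceForm X)
  (hR : ∀ x y : X, dist x y = rf.rmetric x y)

set_option linter.unusedSectionVars false

namespace ResistanceForm

include hR in
lemma minList_spec (x0 : X) (l : List (X → ℝ))
    (hl : ∀ f ∈ l, f ∈ rf.F ∧ (∀ z, 0 ≤ f z ∧ f z ≤ 1) ∧ f x0 = 1) :
    RFminList l ∈ rf.F ∧ (∀ z, 0 ≤ RFminList l z ∧ RFminList l z ≤ 1) ∧
      RFminList l x0 = 1 ∧
      rf.E (RFminList l) (RFminList l) ≤ (l.map fun f => rf.E f f).sum ∧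
      (∀ f ∈ l, ∀ z, RFminList l z ≤ f z) := by
  induction l with
  | nil =>
    refine ⟨rf.const_mem 1, fun z => by norm_num [RFminList], by norm_num [RFminList], ?_,
      fun f hf => absurd hf List.not_mem_nil⟩
    simp only [List.map_nil, List.sum_nil]
    rw [show RFminList ([] : List (X → ℝ)) = (fun _ : X => (1:ℝ)) from rfl,
      rf.E_const_self]
  | cons f t ih =>
    obtain ⟨hfF, hfb, hfx0⟩ := hl f List.mem_cons_self
    have hlt : ∀ g ∈ t, g ∈ rf.F ∧ (∀ z, 0 ≤ g z ∧ g z ≤ 1) ∧ g x0 = 1 :=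
      fun g hg => hl g (List.mem_cons_of_mem f hg)
    obtain ⟨ihF, ihb, ihx0, ihE, ihle⟩ := ih hlt
    have hcons : RFminList (f :: t) = fun x => min (f x) (RFminList t x) := rfl
    obtain ⟨hminF, _, hminE, _⟩ := rf.min_max_mem hR hfF ihF
    refine ⟨by rw [hcons] ; exact hminF, ?_, ?_, ?_, ?_⟩
    · intro z
      rw [hcons]
      exact ⟨le_min (hfb z).1 (ihb z).1, le_trans (min_le_left _ _) (hfb z).2⟩
    · rw [hcons]
      simp only [hfx0, ihx0, min_self]
    · rw [hcons, List.map_cons, List.sum_cons]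
      calc rf.E (fun x => min (f x) (RFminList t x)) (fun x => min (f x) (RFminList t x))
          ≤ rf.E f f + rf.E (RFminList t) (RFminList t) := hminE
      _ ≤ rf.E f f + (t.map fun g => rf.E g g).sum := by linarith
    · intro g hg z
      rw [hcons]
      rcases List.mem_cons.1 hg with rfl | hgt
      · exact min_le_left _ _
      · exact le_trans (min_le_right _ _) (ihle g hgt z)

end ResistanceForm
end MinList
section CutoffFinite

variable {X : Type*} [MetricSpace X] (rf : ResistanceForm X)
  (hR : ∀ x y : X, dist x y = rf.rmetric x y)

set_option linter.unusedSectionVars false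

lemma RFlistsum (n : ℕ) (F : ℕ → ℝ) :
    ((List.range n).map F).sum = ∑ k ∈ Finset.range n, F k := by
  induction n with
  | zero => simp
  | succ n ih =>
    rw [List.range_succ, List.map_append, List.sum_append, Finset.sum_range_succ, ih]
    simp

lemma RFgeom (n : ℕ) : ∑ k ∈ Finset.range n, ((1:ℝ)/2)^k ≤ 2 := by
  have key : ∀ m : ℕ, ∑ k ∈ Finset.range m, ((1:ℝ)/2)^k = 2 - 2*(1/2)^m := by
    intro m
    induction m with
    | zero => simp
    | succ m ih => rw [Finset.sum_range_succ, ih] ; ring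
  rw [key n]
  have : (0:ℝ) < (1/2)^n := by positivity
  linarith

namespace ResistanceForm

include hR in
lemma cutoff_finite (hdb : DoublingOf fun x y : X => dist x y) (x0 : X) :
    ∃ C : ℝ, 0 < C ∧ ∀ ρ : ℝ, 0 < ρ → ∀ V : Finset X, (∀ y ∈ V, ρ ≤ dist x0 y) →
      ∃ w ∈ rf.F, w x0 = 1 ∧ (∀ y ∈ V, w y = 0) ∧ (∀ z, 0 ≤ w z ∧ w z ≤ 1) ∧
        rf.E w w ≤ C / ρ := by
  classical
  obtain ⟨N, hN⟩ := hdb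
  refine ⟨16 * ((N:ℝ)^7 + 1), by positivity, ?_⟩
  intro ρ hρ V hV
  have hky : ∀ y ∈ V, ∃ k : ℕ, 2^k * ρ ≤ dist x0 y ∧ dist x0 y < 2^(k+1) * ρ := by
    intro y hyV
    have hd : ρ ≤ dist x0 y := hV y hyV
    have ht1 : 1 ≤ dist x0 y / ρ := (one_le_div hρ).2 hd
    obtain ⟨n, hn⟩ := pow_unbounded_of_one_lt (dist x0 y / ρ) (by norm_num : (1:ℝ) < 2)
    have hPex : ∃ m : ℕ, dist x0 y / ρ < 2^(m+1) :=
      ⟨n, lt_of_lt_of_le hn (pow_le_pow_right₀ (by norm_num) (Nat.le_succ n))⟩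
    set k := Nat.find hPex with hk
    have hfind : dist x0 y / ρ < 2^(k+1) := Nat.find_spec hPex
    refine ⟨k, ?_, ?_⟩
    · rcases Nat.eq_zero_or_pos k with h0 | hposk
      · rw [h0, pow_zero, one_mul] ; exact hd
      · have hm : ¬ (dist x0 y / ρ < 2^((k-1)+1)) := Nat.find_min hPex (by omega)
        push_neg at hm
        have hkk : (k - 1) + 1 = k := by omega
        rw [hkk] at hm
        calc 2^k * ρ ≤ (dist x0 y / ρ) * ρ := by
              exact mul_le_mul_of_nonneg_right hm (le_of_lt hρ)
        _ = dist x0 y := by field_simp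
    · calc dist x0 y = (dist x0 y / ρ) * ρ := by field_simp
      _ < 2^(k+1) * ρ := by exact mul_lt_mul_of_pos_right hfind hρ
  choose! kof hk1 hk2 using hky
  set K := V.sup kof with hK
  have hcov : ∀ k : ℕ, ∃ s : Finset X, s.card ≤ N^7 ∧
      {y : X | dist x0 y < 2^(k+1) * ρ} ⊆
        ⋃ z ∈ s, {y : X | dist z y < 2^(k+1)*ρ/128} := by
    intro k
    obtain ⟨s, hc, hsub⟩ := RFcover_pow hN 7 x0 (2^(k+1)*ρ/128)
    refine ⟨s, hc, ?_⟩
    have he : (2:ℝ)^7 * (2^(k+1)*ρ/128) = 2^(k+1)*ρ := by ring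
    rw [he] at hsub
    exact hsub
  choose sfun hscard hscov using hcov
  have hg : ∀ (k : ℕ) (z : X), ∃ g, g ∈ rf.F ∧ g x0 = 1 ∧ (∀ t, 0 ≤ g t ∧ g t ≤ 1) ∧
      rf.E g g ≤ 8 * ((2:ℝ)^k * ρ)⁻¹ ∧
      (∀ y ∈ V, kof y = k → dist z y < 2^(k+1)*ρ/128 → g y = 0) := by
    intro k z
    have hskpos : (0:ℝ) < 2^k * ρ := by positivity
    by_cases hrel : ∃ y ∈ V, kof y = k ∧ dist z y < 2^(k+1)*ρ/128
    · obtain ⟨p, hpV, hpk, hpz⟩ := hrel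
      have hd1 : 2^k * ρ ≤ dist x0 p := by rw [← hpk] ; exact hk1 p hpV
      have hdp : 0 < dist x0 p := lt_of_lt_of_le hskpos hd1
      have hne : x0 ≠ p := by
        intro heq
        rw [heq, dist_self] at hdp
        exact lt_irrefl _ hdp
      obtain ⟨h, hhF, hh1, hh0, hhb, hhE⟩ :=
        rf.near_min hR hne (ε := ((2:ℝ)^k*ρ)⁻¹) (inv_pos.2 hskpos)
      have hEh : rf.E h h ≤ 2 * ((2:ℝ)^k*ρ)⁻¹ := by
        have hinv : (dist x0 p)⁻¹ ≤ ((2:ℝ)^k*ρ)⁻¹ := by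
          exact inv_anti₀ hskpos hd1
        linarith
      set q : X → ℝ := (2:ℝ) • h - (fun _ => (1:ℝ)) with hqdef
      have hqF : q ∈ rf.F := rf.sub_mem' (rf.smul_mem 2 hhF) (rf.const_mem 1)
      have hqapp : ∀ t, q t = 2 * h t - 1 := fun t => rfl
      have hEq : rf.E q q = 4 * rf.E h h := by
        rw [hqdef, rf.E_sub_const (rf.smul_mem 2 hhF) 1,
          rf.smul_left 2 h hhF _ (rf.smul_mem 2 hhF), rf.smul_right' 2 hhF hhF]
        ring
      refine ⟨fun t => max 0 (min 1 (q t)), (rf.markov q hqF).1, ?_, ?_, ?_, ?_⟩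
      · show max 0 (min 1 (q x0)) = 1
        rw [hqapp x0, hh1]
        norm_num
      · intro t
        exact ⟨le_max_left _ _, max_le zero_le_one (min_le_left _ _)⟩
      · have := (rf.markov q hqF).2
        rw [hEq] at this
        linarith
      · intro y hyV hky hdzy
        have hdyp : dist y p < 2^k*ρ/32 := by
          have htri : dist y p ≤ dist y z + dist z p := dist_triangle y z p
          have h1 : dist y z = dist z y := dist_comm y z
          have h2 : dist z p = dist z p := rfl
          have hzp' : dist z p < 2^(k+1)*ρ/128 := hpz
          have hzy' : dist z y < 2^(k+1)*ρ/128 := hdzy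
          have he2 : 2*((2:ℝ)^(k+1)*ρ/128) = 2^k*ρ/32 := by rw [pow_succ] ; ring
          rw [h1] at htri
          linarith
        have hhold := rf.holder hR hhF y p
        rw [hh0, sub_zero] at hhold
        have hsq : (h y)^2 ≤ 1/16 := by
          have hb2 : rf.E h h * dist y p ≤ (2 * ((2:ℝ)^k*ρ)⁻¹) * (2^k*ρ/32) := by
            apply mul_le_mul hEh (le_of_lt hdyp) dist_nonneg (by positivity)
          have he3 : (2 * ((2:ℝ)^k*ρ)⁻¹) * (2^k*ρ/32) = 1/16 := by
            field_simp
            norm_num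
          rw [he3] at hb2
          linarith
        have hy14 : h y ≤ 1/4 := by nlinarith [(hhb y).1]
        have hq2 : q y ≤ -(1/2) := by rw [hqapp y] ; linarith
        show max 0 (min 1 (q y)) = 0
        rw [min_eq_right (by linarith), max_eq_left (by linarith)]
    · refine ⟨fun _ => 1, rf.const_mem 1, rfl, fun t => by norm_num, ?_, ?_⟩
      · rw [rf.E_const_self]
        positivity
      · intro y hyV hky hdzy
        exact absurd ⟨y, hyV, hky, hdzy⟩ hrel
  choose gfun hgF hgx0 hgb hgE hgvan using hg
  set Lk : ℕ → List (X → ℝ) := fun k => (sfun k).toList.map (gfun k) with hLk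
  have hLkspec : ∀ k, ∀ f ∈ Lk k, f ∈ rf.F ∧ (∀ z, 0 ≤ f z ∧ f z ≤ 1) ∧ f x0 = 1 := by
    intro k f hf
    obtain ⟨z, hz, rfl⟩ := List.mem_map.1 hf
    exact ⟨hgF k z, hgb k z, hgx0 k z⟩
  set wk : ℕ → X → ℝ := fun k => RFminList (Lk k) with hwk
  have hwkspec := fun k => rf.minList_spec hR x0 (Lk k) (hLkspec k)
  set M : List (X → ℝ) := (List.range (K+1)).map wk with hM
  have hMspec : ∀ f ∈ M, f ∈ rf.F ∧ (∀ z, 0 ≤ f z ∧ f z ≤ 1) ∧ f x0 = 1 := by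
    intro f hf
    obtain ⟨k, hk, rfl⟩ := List.mem_map.1 hf
    obtain ⟨a, b, c, _, _⟩ := hwkspec k
    exact ⟨a, b, c⟩
  obtain ⟨hwF, hwb, hwx0, hwE, hwle⟩ := rf.minList_spec hR x0 M hMspec
  refine ⟨RFminList M, hwF, hwx0, ?_, hwb, ?_⟩
  · intro y hyV
    have hkK : kof y ≤ K := Finset.le_sup hyV
    have hmem : y ∈ {y' : X | dist x0 y' < 2^(kof y + 1) * ρ} := hk2 y hyV
    obtain ⟨z, hzs, hzy⟩ := Set.mem_iUnion₂.1 (hscov (kof y) hmem)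
    have hval : gfun (kof y) z y = 0 := hgvan (kof y) z y hyV rfl hzy
    have h1 : RFminList M y ≤ wk (kof y) y :=
      hwle (wk (kof y)) (List.mem_map.2 ⟨kof y, List.mem_range.2 (by omega), rfl⟩) y
    have h2 : wk (kof y) y ≤ gfun (kof y) z y :=
      (hwkspec (kof y)).2.2.2.2 (gfun (kof y) z)
        (List.mem_map.2 ⟨z, Finset.mem_toList.2 hzs, rfl⟩) y
    have h3 := (hwb y).1
    rw [hval] at h2
    linarith
  · have hterm : ∀ k, rf.E (wk k) (wk k) ≤ ((N:ℝ)^7) * (8 * ((2:ℝ)^k * ρ)⁻¹) := by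
      intro k
      have h1 := (hwkspec k).2.2.2.1
      have h2 : ((Lk k).map fun f => rf.E f f).sum
          ≤ ((Lk k).map fun f => rf.E f f).length • (8 * ((2:ℝ)^k * ρ)⁻¹) := by
        apply List.sum_le_card_nsmul
        intro x hx
        obtain ⟨f, hf, rfl⟩ := List.mem_map.1 hx
        obtain ⟨z, hz, rfl⟩ := List.mem_map.1 hf
        exact hgE k z
      have hlen : ((Lk k).map fun f => rf.E f f).length = (sfun k).card := by
        rw [List.length_map, hLk]
        simp [Finset.length_toList]
      rw [hlen, nsmul_eq_mul] at h2
      have h3 : ((sfun k).card : ℝ) * (8 * ((2:ℝ)^k * ρ)⁻¹)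
          ≤ ((N:ℝ)^7) * (8 * ((2:ℝ)^k * ρ)⁻¹) := by
        apply mul_le_mul_of_nonneg_right _ (by positivity)
        exact_mod_cast hscard k
      calc rf.E (wk k) (wk k) ≤ ((Lk k).map fun f => rf.E f f).sum := h1
      _ ≤ ((sfun k).card : ℝ) * (8 * ((2:ℝ)^k * ρ)⁻¹) := h2
      _ ≤ ((N:ℝ)^7) * (8 * ((2:ℝ)^k * ρ)⁻¹) := h3
    have hMsum : (M.map fun f => rf.E f f).sum
        = ∑ k ∈ Finset.range (K+1), rf.E (wk k) (wk k) := by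
      rw [hM, List.map_map]
      exact RFlistsum (K+1) fun k => rf.E (wk k) (wk k)
    have hsum2 : ∑ k ∈ Finset.range (K+1), rf.E (wk k) (wk k)
        ≤ ∑ k ∈ Finset.range (K+1), ((N:ℝ)^7) * (8 * ((2:ℝ)^k * ρ)⁻¹) :=
      Finset.sum_le_sum fun k _ => hterm k
    have hsum3 : ∑ k ∈ Finset.range (K+1), ((N:ℝ)^7) * (8 * ((2:ℝ)^k * ρ)⁻¹)
        ≤ 16 * ((N:ℝ)^7 + 1) / ρ := by
      have hre : ∀ k : ℕ, ((N:ℝ)^7) * (8 * ((2:ℝ)^k * ρ)⁻¹)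
          = (8 * (N:ℝ)^7 / ρ) * ((1:ℝ)/2)^k := by
        intro k
        rw [div_pow, one_pow]
        field_simp
      calc ∑ k ∈ Finset.range (K+1), ((N:ℝ)^7) * (8 * ((2:ℝ)^k * ρ)⁻¹)
          = (8 * (N:ℝ)^7 / ρ) * ∑ k ∈ Finset.range (K+1), ((1:ℝ)/2)^k := by
            rw [Finset.mul_sum]
            exact Finset.sum_congr rfl fun k _ => hre k
      _ ≤ (8 * (N:ℝ)^7 / ρ) * 2 := by
          apply mul_le_mul_of_nonneg_left (RFgeom (K+1)) (by positivity)
      _ ≤ 16 * ((N:ℝ)^7 + 1) / ρ := by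
          rw [div_mul_eq_mul_div, div_le_div_iff₀ hρ hρ]
          nlinarith [hρ, pow_nonneg (Nat.cast_nonneg (α := ℝ) N) 7]
    calc rf.E (RFminList M) (RFminList M) ≤ (M.map fun f => rf.E f f).sum := hwE
    _ = ∑ k ∈ Finset.range (K+1), rf.E (wk k) (wk k) := hMsum
    _ ≤ ∑ k ∈ Finset.range (K+1), ((N:ℝ)^7) * (8 * ((2:ℝ)^k * ρ)⁻¹) := hsum2
    _ ≤ 16 * ((N:ℝ)^7 + 1) / ρ := hsum3

end ResistanceForm
end CutoffFinite
section Cutoff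

variable {X : Type*} [MetricSpace X] (rf : ResistanceForm X)
  (hR : ∀ x y : X, dist x y = rf.rmetric x y)

set_option linter.unusedSectionVars false

namespace ResistanceForm

include hR in
lemma cutoff [CompleteSpace X] (hdb : DoublingOf fun x y : X => dist x y) (x0 : X) :
    ∃ C : ℝ, 0 < C ∧ ∀ ρ : ℝ, 0 < ρ → ∃ φ ∈ rf.F, φ x0 = 1 ∧
      (∀ z, 0 ≤ φ z ∧ φ z ≤ 1) ∧ (∀ y : X, ρ ≤ dist x0 y → φ y = 0) ∧
      rf.E φ φ ≤ C / ρ := by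
  classical
  obtain ⟨C, hC, hcut⟩ := rf.cutoff_finite hR hdb x0
  refine ⟨C, hC, ?_⟩
  intro ρ hρ
  set T : Set X := {y : X | ρ ≤ dist x0 y} with hT
  -- finite nets in T at scale 1/(j+1) within radius ρ + j
  have hnet : ∀ j : ℕ, ∃ t : Set X, t ⊆ T ∩ Metric.closedBall x0 (ρ + j) ∧ t.Finite ∧
      T ∩ Metric.closedBall x0 (ρ + j) ⊆ ⋃ y ∈ t, Metric.ball y (1/((j:ℝ)+1)) := by
    intro j
    have htb : TotallyBounded (T ∩ Metric.closedBall x0 (ρ + j)) := by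
      have hsub : T ∩ Metric.closedBall x0 (ρ + j) ⊆ {y : X | dist x0 y < ρ + j + 1} := by
        rintro y ⟨_, hy2⟩
        rw [Metric.mem_closedBall] at hy2
        simp only [Set.mem_setOf_eq]
        rw [dist_comm]
        linarith
      exact TotallyBounded.subset hsub (RFtotallyBounded hdb x0 _)
    obtain ⟨t, ht1, ht2, ht3⟩ :=
      Metric.finite_approx_of_totallyBounded htb (1/((j:ℝ)+1)) (by positivity)
    exact ⟨t, ht1, ht2, ht3⟩
  choose net hnetsub hnetfin hnetcov using hnet
  set Vfin : ℕ → Finset X := fun j => (hnetfin j).toFinset with hVfin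
  set W : ℕ → Finset X := fun j => (Finset.range (j+1)).biUnion Vfin with hW
  have hWT : ∀ j, ∀ y ∈ W j, ρ ≤ dist x0 y := by
    intro j y hy
    obtain ⟨i, _, hyi⟩ := Finset.mem_biUnion.1 hy
    have := (hnetsub i) ((hnetfin i).mem_toFinset.1 hyi)
    exact this.1
  have hWmono : ∀ j l, j ≤ l → W j ⊆ W l := by
    intro j l hjl y hy
    obtain ⟨i, hi, hyi⟩ := Finset.mem_biUnion.1 hy
    exact Finset.mem_biUnion.2 ⟨i, Finset.mem_range.2 (by
      have := Finset.mem_range.1 hi ; omega), hyi⟩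
  -- the admissible infima
  set S : ℕ → Set ℝ := fun j =>
    {e | ∃ w ∈ rf.F, w x0 = 1 ∧ (∀ y ∈ W j, w y = 0) ∧ rf.E w w = e} with hS
  have hSne : ∀ j, ∃ e ∈ S j, e ≤ C / ρ := by
    intro j
    obtain ⟨w, hwF, hwx0, hwvan, _, hwE⟩ := hcut ρ hρ (W j) (hWT j)
    exact ⟨rf.E w w, ⟨w, hwF, hwx0, hwvan, rfl⟩, hwE⟩
  have hSbdd : ∀ j, BddBelow (S j) := by
    intro j
    refine ⟨0, fun e ⟨w, hwF, _, _, hwE⟩ => hwE ▸ rf.nonneg w hwF⟩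
  set d : ℕ → ℝ := fun j => sInf (S j) with hd
  have hdle : ∀ j, ∀ w ∈ rf.F, w x0 = 1 → (∀ y ∈ W j, w y = 0) → d j ≤ rf.E w w :=
    fun j w hwF h1 h2 => csInf_le (hSbdd j) ⟨w, hwF, h1, h2, rfl⟩
  have hdub : ∀ j, d j ≤ C / ρ := by
    intro j
    obtain ⟨e, he, heC⟩ := hSne j
    exact le_trans (csInf_le (hSbdd j) he) heC
  have hd0 : ∀ j, 0 ≤ d j := by
    intro j
    obtain ⟨e, he, _⟩ := hSne j
    exact le_csInf ⟨e, he⟩ (fun b ⟨w, hwF, _, _, hwE⟩ => hwE ▸ rf.nonneg w hwF)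
  have hdmono : Monotone d := by
    intro j l hjl
    apply le_csInf
    · obtain ⟨e, he, _⟩ := hSne l
      exact ⟨e, he⟩
    · rintro b ⟨w, hwF, h1, h2, hwE⟩
      rw [← hwE]
      exact hdle j w hwF h1 (fun y hy => h2 y (hWmono j l hjl hy))
  have hdbddA : BddAbove (Set.range d) := ⟨C / ρ, by rintro e ⟨j, rfl⟩ ; exact hdub j⟩
  set L := ⨆ j, d j with hL
  have hdL : ∀ j, d j ≤ L := fun j => le_ciSup hdbddA j
  have hLC : L ≤ C / ρ := ciSup_le hdub
  have hdtend : Tendsto d atTop (𝓝 L) := tendsto_atTop_ciSup hdmono hdbddA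
  -- near minimizers
  have hwj : ∀ j : ℕ, ∃ w ∈ rf.F, w x0 = 1 ∧ (∀ y ∈ W j, w y = 0) ∧
      rf.E w w < d j + 1/((j:ℝ)+1) := by
    intro j
    have hlt : d j < d j + 1/((j:ℝ)+1) := by
      have : (0:ℝ) < 1/((j:ℝ)+1) := by positivity
      linarith
    obtain ⟨e, ⟨w, hwF, h1, h2, hwE⟩, helt⟩ := exists_lt_of_csInf_lt
      (let ⟨e, he, _⟩ := hSne j ; ⟨e, he⟩) hlt
    exact ⟨w, hwF, h1, h2, hwE ▸ helt⟩
  choose w hwF hwx0 hwvan hwE using hwj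
  -- Cauchy
  have hcauchy : ∀ ε : ℝ, 0 < ε → ∃ N : ℕ, ∀ p ≥ N, ∀ q ≥ N,
      rf.E (w p - w q) (w p - w q) < ε := by
    intro ε hε
    have h8 : (0:ℝ) < ε/8 := by linarith
    obtain ⟨N1, hN1⟩ := (Metric.tendsto_atTop.1 hdtend) (ε/8) h8
    obtain ⟨N2, hN2⟩ := exists_nat_gt (8/ε)
    refine ⟨max N1 N2, fun p hp q hq => ?_⟩
    have hpN1 : N1 ≤ p := le_trans (le_max_left _ _) hp
    have hqN1 : N1 ≤ q := le_trans (le_max_left _ _) hq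
    have hpN2 : N2 ≤ p := le_trans (le_max_right _ _) hp
    have hqN2 : N2 ≤ q := le_trans (le_max_right _ _) hq
    set m := min p q with hm
    have hmN1 : N1 ≤ m := le_min hpN1 hqN1
    -- mid admissible for W m
    set mid := (1/2 : ℝ) • (w p + w q) with hmid
    have hmidF : mid ∈ rf.F := rf.smul_mem _ (rf.add_mem (hwF p) (hwF q))
    have hmidx0 : mid x0 = 1 := by
      show (1/2 : ℝ) * (w p x0 + w q x0) = 1
      rw [hwx0 p, hwx0 q] ; norm_num
    have hmidvan : ∀ y ∈ W m, mid y = 0 := by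
      intro y hy
      show (1/2 : ℝ) * (w p y + w q y) = 0
      rw [hwvan p y (hWmono m p (min_le_left _ _) hy),
        hwvan q y (hWmono m q (min_le_right _ _) hy)]
      norm_num
    have hdm : d m ≤ rf.E mid mid := hdle m mid hmidF hmidx0 hmidvan
    -- parallelogram
    have hEmid : rf.E mid mid = (1/4) * (rf.E (w p) (w p) + 2 * rf.E (w p) (w q)
        + rf.E (w q) (w q)) := by
      rw [hmid, rf.smul_left _ _ (rf.add_mem (hwF p) (hwF q)) _ hmidF, hmid,
        rf.smul_right' _ (rf.add_mem (hwF p) (hwF q)) (rf.add_mem (hwF p) (hwF q)),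
        rf.E_self_expand (hwF p) (hwF q)]
      ring
    have hEdiff : rf.E (w p - w q) (w p - w q) = rf.E (w p) (w p)
        - 2 * rf.E (w p) (w q) + rf.E (w q) (w q) := rf.E_sub_expand (hwF p) (hwF q)
    have hEp := hwE p
    have hEq := hwE q
    -- numeric bounds
    have hdmL : L - ε/8 < d m := by
      have := hN1 m hmN1
      rw [Real.dist_eq, abs_sub_lt_iff] at this
      linarith [this.2]
    have hdpL : d p ≤ L := hdL p
    have hdqL : d q ≤ L := hdL q
    have hfrac : ∀ r : ℕ, N2 ≤ r → 1/((r:ℝ)+1) < ε/8 := by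
      intro r hr
      have hr1 : (0:ℝ) < (r:ℝ) + 1 := by positivity
      rw [div_lt_iff₀ hr1]
      rw [div_lt_iff₀ hε] at hN2
      have : (N2:ℝ) ≤ (r:ℝ) := Nat.cast_le.2 hr
      nlinarith
    have hfp := hfrac p hpN2
    have hfq := hfrac q hqN2
    rw [hEdiff]
    rw [hEmid] at hdm
    linarith
  obtain ⟨ws, hwsF, hwsconv⟩ := rf.complete w hwF hcauchy
  have hwslim : Tendsto (fun j => rf.E (ws - w j) (ws - w j)) atTop (𝓝 0) :=
    RFtendsto_nonneg_of_eps (fun j => rf.nonneg _ (rf.sub_mem' hwsF (hwF j))) hwsconv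
  -- pointwise differences converge
  have hptw : ∀ a b : X, Tendsto (fun j => w j a - w j b) atTop (𝓝 (ws a - ws b)) := by
    intro a b
    have hbnd : ∀ j, |(w j a - w j b) - (ws a - ws b)|
        ≤ Real.sqrt (rf.E (ws - w j) (ws - w j) * dist a b) := by
      intro j
      have hmem := rf.sub_mem' hwsF (hwF j)
      have hh := rf.holder hR hmem a b
      have heq : (w j a - w j b) - (ws a - ws b) = -((ws - w j) a - (ws - w j) b) := by
        simp ; ring
      rw [heq, abs_neg]
      have := Real.sqrt_le_sqrt hh
      rwa [Real.sqrt_sq_eq_abs] at this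
    have hg : Tendsto (fun j => Real.sqrt (rf.E (ws - w j) (ws - w j) * dist a b))
        atTop (𝓝 0) := by
      have h1 : Tendsto (fun j => rf.E (ws - w j) (ws - w j) * dist a b) atTop (𝓝 0) := by
        simpa using hwslim.mul_const (dist a b)
      have := (Real.continuous_sqrt.tendsto 0).comp h1
      simpa [Function.comp_def] using this
    have hbnd' : ∀ j, ‖(w j a - w j b) - (ws a - ws b)‖
        ≤ Real.sqrt (rf.E (ws - w j) (ws - w j) * dist a b) := by
      simpa [Real.norm_eq_abs] using hbnd
    have := squeeze_zero_norm hbnd' hg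
    have h2 := this.add (tendsto_const_nhds (x := ws a - ws b))
    simpa using h2
  -- the shifted function ψ
  set c := ws x0 - 1 with hc
  set ψ : X → ℝ := ws - (fun _ => c) with hψ
  have hψF : ψ ∈ rf.F := rf.sub_mem' hwsF (rf.const_mem c)
  have hψx0 : ψ x0 = 1 := by
    show ws x0 - c = 1
    rw [hc] ; ring
  have hψD : ∀ i : ℕ, ∀ y ∈ Vfin i, ψ y = 0 := by
    intro i y hyi
    have hyW : ∀ j, i ≤ j → y ∈ W j :=
      fun j hij => Finset.mem_biUnion.2 ⟨i, Finset.mem_range.2 (by omega), hyi⟩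
    have h1 : Tendsto (fun j => w j x0 - w j y) atTop (𝓝 (ws x0 - ws y)) := hptw x0 y
    have h2 : ∀ᶠ j in atTop, w j x0 - w j y = 1 := by
      rw [Filter.eventually_atTop]
      exact ⟨i, fun j hij => by rw [hwx0 j, hwvan j y (hyW j hij)] ; ring⟩
    have h3 : Tendsto (fun j => w j x0 - w j y) atTop (𝓝 1) :=
      Filter.Tendsto.congr' (h2.mono fun j hj => hj.symm) tendsto_const_nhds
    have h4 : ws x0 - ws y = 1 := tendsto_nhds_unique h1 h3
    show ws y - c = 0
    rw [hc] ; linarith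
  have hψvan : ∀ y : X, ρ ≤ dist x0 y → ψ y = 0 := by
    intro y hy
    have hcont := rf.continuous_of_mem hR hψF
    have habs : ∀ ε : ℝ, 0 < ε → |ψ y| < ε := by
      intro ε hε
      obtain ⟨δ, hδ, hδp⟩ := Metric.continuous_iff.1 hcont y ε hε
      obtain ⟨j, hj1, hj2⟩ : ∃ j : ℕ, 1/((j:ℝ)+1) < δ ∧ dist x0 y ≤ ρ + j := by
        obtain ⟨n1, hn1⟩ := exists_nat_gt (1/δ)
        obtain ⟨n2, hn2⟩ := exists_nat_gt (dist x0 y - ρ)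
        refine ⟨max n1 n2, ?_, ?_⟩
        · have h1 : (n1:ℝ) ≤ (max n1 n2 : ℕ) := Nat.cast_le.2 (le_max_left _ _)
          rw [div_lt_iff₀ (by positivity)]
          rw [div_lt_iff₀ hδ] at hn1
          nlinarith
        · have h2 : (n2:ℝ) ≤ (max n1 n2 : ℕ) := Nat.cast_le.2 (le_max_right _ _)
          linarith
      have hyA : y ∈ T ∩ Metric.closedBall x0 (ρ + j) := by
        constructor
        · exact hy
        · rw [Metric.mem_closedBall, dist_comm] ; exact hj2
      obtain ⟨z, hzt, hzy⟩ := Set.mem_iUnion₂.1 (hnetcov j hyA)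
      rw [Metric.mem_ball] at hzy
      have hzV : z ∈ Vfin j := (hnetfin j).mem_toFinset.2 hzt
      have hz0 : ψ z = 0 := hψD j z hzV
      have := hδp z (by rw [dist_comm] at hzy ; exact lt_trans hzy hj1)
      rw [Real.dist_eq, hz0] at this
      rwa [zero_sub, abs_neg] at this
    by_contra hne
    have : (0:ℝ) < |ψ y| := abs_pos.2 hne
    exact lt_irrefl _ (habs |ψ y| this)
  have hEψ : rf.E ψ ψ ≤ C / ρ := by
    have h1 : rf.E ψ ψ = rf.E ws ws := rf.E_sub_const hwsF c
    have h2 : Tendsto (fun j => rf.E (w j) (w j)) atTop (𝓝 (rf.E ws ws)) :=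
      rf.tendsto_E_self_of_E_sub hwsF hwF hwslim
    have h3 : Tendsto (fun j : ℕ => d j + 1/((j:ℝ)+1)) atTop (𝓝 L) := by
      have := hdtend.add RFone_div_tendsto
      simpa using this
    have h4 : rf.E ws ws ≤ L :=
      le_of_tendsto_of_tendsto' h2 h3 (fun j => le_trans (le_of_lt (hwE j))
        (by linarith [hdL j, le_refl (1/((j:ℝ)+1))]))
    rw [h1]
    exact le_trans h4 hLC
  -- final clamp
  refine ⟨fun t => max 0 (min 1 (ψ t)), (rf.markov ψ hψF).1, ?_, ?_, ?_, ?_⟩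
  · show max 0 (min 1 (ψ x0)) = 1
    rw [hψx0] ; norm_num
  · intro z
    exact ⟨le_max_left _ _, max_le zero_le_one (min_le_left _ _)⟩
  · intro y hy
    show max 0 (min 1 (ψ y)) = 0
    rw [hψvan y hy] ; norm_num
  · exact le_trans (rf.markov ψ hψF).2 hEψ

end ResistanceForm
end Cutoff
section SumLemmas

variable {X : Type*} (rf : ResistanceForm X)

namespace ResistanceForm

lemma sum_mem' {ι : Type*} (s : Finset ι) (f : ι → X → ℝ) (hf : ∀ i ∈ s, f i ∈ rf.F) :
    (∑ i ∈ s, f i) ∈ rf.F := by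
  classical
  induction s using Finset.induction with
  | empty => simpa using rf.zero_mem
  | @insert _ _ hx ih =>
    rw [Finset.sum_insert hx]
    exact rf.add_mem (hf _ (Finset.mem_insert_self _ _))
      (ih fun i hi => hf i (Finset.mem_insert_of_mem hi))

lemma E_sum_left' {ι : Type*} (s : Finset ι) (f : ι → X → ℝ)
    (hf : ∀ i ∈ s, f i ∈ rf.F) {v : X → ℝ} (hv : v ∈ rf.F) :
    rf.E (∑ i ∈ s, f i) v = ∑ i ∈ s, rf.E (f i) v := by
  classical
  induction s using Finset.induction with
  | empty => simpa using rf.E_zero_left' hv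
  | @insert _ _ hx ih =>
    rw [Finset.sum_insert hx, Finset.sum_insert hx,
      rf.add_left _ (hf _ (Finset.mem_insert_self _ _)) _
        (rf.sum_mem' _ _ fun i hi => hf i (Finset.mem_insert_of_mem hi)) v hv,
      ih fun i hi => hf i (Finset.mem_insert_of_mem hi)]

lemma E_sum_sum {ι : Type*} (s : Finset ι) (f : ι → X → ℝ)
    (hf : ∀ i ∈ s, f i ∈ rf.F) :
    rf.E (∑ i ∈ s, f i) (∑ i ∈ s, f i) = ∑ i ∈ s, ∑ j ∈ s, rf.E (f i) (f j) := by
  classical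
  have hS : (∑ i ∈ s, f i) ∈ rf.F := rf.sum_mem' _ _ hf
  rw [rf.E_sum_left' s f hf hS]
  apply Finset.sum_congr rfl
  intro i hi
  rw [rf.symm (f i) (hf i hi) _ hS, rf.E_sum_left' s f hf (hf i hi)]
  exact Finset.sum_congr rfl fun j hj => rf.symm _ (hf j hj) _ (hf i hi)

end ResistanceForm
end SumLemmas

namespace ResistanceForm

theorem main_approx {X : Type*} [MetricSpace X] [CompleteSpace X]
    (rf : ResistanceForm X) (hR : ∀ x y : X, dist x y = rf.rmetric x y)
    (hdb : DoublingOf fun x y : X => dist x y)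
    (u : X → ℝ) (hu : u ∈ rf.F) :
    ∃ un : ℕ → X → ℝ,
      (∀ n, un n ∈ rf.F ∧ Continuous (un n) ∧ HasCompactSupport (un n) ∧
        tsupport (un n) ⊆ tsupport u) ∧
      Tendsto (fun n => rf.E (u - un n) (u - un n)) atTop (𝓝 0) := by
  classical
  cases isEmpty_or_nonempty X with
  | inl hemp =>
    refine ⟨fun _ => u, fun n => ⟨hu, rf.continuous_of_mem hR hu, ?_, subset_rfl⟩, ?_⟩
    · show IsCompact (tsupport u)
      rw [Set.eq_empty_of_isEmpty (tsupport u)]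
      exact isCompact_empty
    · have hzero : (fun _ : ℕ => rf.E (u - u) (u - u)) = fun _ => (0:ℝ) := by
        funext n
        rw [sub_self]
        exact rf.E_zero_left' rf.zero_mem
      rw [hzero]
      exact tendsto_const_nhds
  | inr hne =>
    obtain ⟨x0⟩ := hne
    haveI : ProperSpace X := RFproper hdb
    obtain ⟨C0, hC0, hcut⟩ := rf.cutoff hR hdb x0
    set m1 : ℕ → ℝ := fun m => (m:ℝ) + 1 with hm1
    set ρm : ℕ → ℝ := fun m => 4 * C0 * (m1 m)^2 with hρm
    clear_value m1
    have hm1pos : ∀ m, 0 < m1 m := fun m => by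
      simp only [hm1] ; positivity
    have hm1one : ∀ m, 1 ≤ m1 m := fun m => by
      simp only [hm1] ; linarith [Nat.cast_nonneg (α := ℝ) m]
    clear_value ρm
    have hρpos : ∀ m, 0 < ρm m := fun m => by
      simp only [hρm]
      exact mul_pos (by linarith) (pow_pos (hm1pos m) 2)
    have hφex := fun m => hcut (ρm m) (hρpos m)
    choose φ hφF hφx0 hφb hφvan hφE using hφex
    have hE4 : ∀ m, rf.E (φ m) (φ m) ≤ 1/(4*(m1 m)^2) := by
      intro m
      have := hφE m
      have h1 : C0 / ρm m = 1/(4*(m1 m)^2) := by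
        have hne1 : m1 m ≠ 0 := (hm1pos m).ne'
        have hne2 : C0 ≠ 0 := hC0.ne'
        simp only [hρm]
        field_simp
      rwa [h1] at this
    have hφhalf : ∀ m (z : X), dist x0 z ≤ m1 m → 1/2 ≤ φ m z := by
      intro m z hz
      have hhol := rf.holder hR (hφF m) x0 z
      have h1 : rf.E (φ m) (φ m) * dist x0 z ≤ (1/(4*(m1 m)^2)) * m1 m := by
        apply mul_le_mul (hE4 m) hz dist_nonneg
        positivity
      have h2 : (1/(4*(m1 m)^2)) * m1 m = 1/(4 * m1 m) := by
        have := (hm1pos m).ne'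
        field_simp
      have h3 : 1/(4 * m1 m) ≤ 1/4 := by
        apply div_le_div_of_nonneg_left (by norm_num) (by norm_num)
        nlinarith [hm1one m]
      rw [hφx0 m] at hhol
      have h4 : (1 - φ m z)^2 ≤ 1/4 := by
        calc (1 - φ m z)^2 ≤ rf.E (φ m) (φ m) * dist x0 z := hhol
        _ ≤ (1/(4*(m1 m)^2)) * m1 m := h1
        _ = 1/(4 * m1 m) := h2
        _ ≤ 1/4 := h3
      nlinarith [(hφb m z).2]
    -- truncated functions
    have hsmulF : ∀ m, (m1 m) • φ m ∈ rf.F := fun m => rf.smul_mem _ (hφF m)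
    have hsmulE : ∀ (c : ℝ) m, rf.E (c • φ m) (c • φ m) = c^2 * rf.E (φ m) (φ m) := by
      intro c m
      rw [rf.smul_left c _ (hφF m) _ (rf.smul_mem c (hφF m)),
        rf.smul_right' c (hφF m) (hφF m)]
      ring
    have hquarter : ∀ (c : ℝ) m, c^2 ≤ (m1 m)^2 →
        rf.E (c • φ m) (c • φ m) ≤ 1/4 := by
      intro c m hc
      rw [hsmulE c m]
      have h1 := hE4 m
      have h2 : (0:ℝ) ≤ rf.E (φ m) (φ m) := rf.nonneg _ (hφF m)
      have h3 : c^2 * rf.E (φ m) (φ m) ≤ (m1 m)^2 * (1/(4*(m1 m)^2)) := by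
        apply mul_le_mul hc h1 h2 (by positivity)
      have h4 : (m1 m)^2 * (1/(4*(m1 m)^2)) = 1/4 := by
        have := (hm1pos m).ne'
        field_simp
      linarith
    set s : ℕ → X → ℝ := fun m => fun z => min (u z) (((m1 m) • φ m) z) with hs
    set t : ℕ → X → ℝ := fun m => fun z => max (s m z) ((((-(m1 m))) • φ m) z) with ht
    have hsspec := fun m => rf.min_max_mem hR hu (hsmulF m)
    have hsF : ∀ m, s m ∈ rf.F := fun m => (hsspec m).1
    have hsE : ∀ m, rf.E (s m) (s m) ≤ rf.E u u + 1/4 := by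
      intro m
      have h1 := (hsspec m).2.2.1
      have h2 := hquarter (m1 m) m (le_refl _)
      linarith
    have htspec := fun m => rf.min_max_mem hR (hsF m) (rf.smul_mem (-(m1 m)) (hφF m))
    have htF : ∀ m, t m ∈ rf.F := fun m => (htspec m).2.1
    have htE : ∀ m, rf.E (t m) (t m) ≤ rf.E u u + 1/2 := by
      intro m
      have h1 := (htspec m).2.2.2
      have h2 := hquarter (-(m1 m)) m (le_of_eq (neg_sq (m1 m)))
      have h3 := hsE m
      linarith
    -- pointwise values
    have htval : ∀ m (z : X), dist x0 z ≤ m1 m → 2 * |u z| ≤ m1 m → t m z = u z := by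
      intro m z hz1 hz2
      have hφz : 1/2 ≤ φ m z := hφhalf m z hz1
      have hb : |u z| ≤ (m1 m) * φ m z := by
        have h1 : (m1 m) * (1/2) ≤ (m1 m) * φ m z :=
          mul_le_mul_of_nonneg_left hφz (le_of_lt (hm1pos m))
        have h2 : |u z| ≤ (m1 m) * (1/2) := by linarith
        linarith
      have happ1 : ((m1 m) • φ m) z = (m1 m) * φ m z := rfl
      have happ2 : (((-(m1 m))) • φ m) z = -((m1 m) * φ m z) := by
        show (-(m1 m)) * φ m z = -((m1 m) * φ m z)
        ring
      show max (s m z) ((((-(m1 m))) • φ m) z) = u z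
      have hsz : s m z = u z := by
        show min (u z) (((m1 m) • φ m) z) = u z
        rw [happ1]
        apply min_eq_left
        calc u z ≤ |u z| := le_abs_self _
        _ ≤ (m1 m) * φ m z := hb
      rw [hsz, happ2]
      apply max_eq_left
      calc -((m1 m) * φ m z) ≤ -|u z| := by linarith
      _ ≤ u z := neg_abs_le _
    have hpt : ∀ z : X, Tendsto (fun m => t m z) atTop (𝓝 (u z)) := by
      intro z
      have hev : ∀ᶠ m in atTop, t m z = u z := by
        rw [Filter.eventually_atTop]
        refine ⟨Nat.ceil (max (dist x0 z) (2*|u z|)), fun m hm => ?_⟩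
        have h1 : max (dist x0 z) (2*|u z|) ≤ (m:ℝ) := by
          calc max (dist x0 z) (2*|u z|) ≤ (Nat.ceil (max (dist x0 z) (2*|u z|)) : ℝ) :=
            Nat.le_ceil _
          _ ≤ (m:ℝ) := Nat.cast_le.2 hm
        have h2 : dist x0 z ≤ m1 m := by
          have := le_max_left (dist x0 z) (2*|u z|)
          simp only [hm1] ; linarith
        have h3 : 2*|u z| ≤ m1 m := by
          have := le_max_right (dist x0 z) (2*|u z|)
          simp only [hm1] ; linarith
        exact htval m z h2 h3
      exact Filter.Tendsto.congr' (hev.mono fun m hm => hm.symm) tendsto_const_nhds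
    -- weak convergence
    set CC := rf.E u u + 1 with hCC
    clear_value CC
    have hCCpos : (0:ℝ) ≤ CC := by
      rw [hCC] ; linarith [rf.nonneg u hu]
    have htCC : ∀ m, rf.E (t m) (t m) ≤ CC := fun m => by
      rw [hCC] ; linarith [htE m]
    obtain ⟨_, _, hweak⟩ := rf.weak_closure hR htF hCCpos htCC hpt
    set dd : ℕ → X → ℝ := fun m => t m - u with hdd
    have hddF : ∀ m, dd m ∈ rf.F := fun m => rf.sub_mem' (htF m) hu
    have hEd : ∀ h ∈ rf.F, Tendsto (fun m => rf.E h (dd m)) atTop (𝓝 0) := by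
      intro h hh
      have h1 := (hweak h hh).sub (tendsto_const_nhds (x := rf.E h u))
      have h2 : (fun m => rf.E h (t m) - rf.E h u) = fun m => rf.E h (dd m) := by
        funext m
        rw [hdd]
        exact (rf.sub_right' hh (htF m) hu).symm
      rw [h2] at h1
      simpa using h1
    set B2 := (rf.en u + Real.sqrt CC)^2 with hB2
    clear_value B2
    have hddB : ∀ m, rf.E (dd m) (dd m) ≤ B2 := by
      intro m
      have h1 : rf.en (dd m) ≤ rf.en (t m) + rf.en u := rf.en_sub_le (htF m) hu
      have h2 : rf.en (t m) ≤ Real.sqrt CC := Real.sqrt_le_sqrt (htCC m)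
      have h3 : rf.en (dd m) ≤ rf.en u + Real.sqrt CC := by linarith
      have h4 : (rf.en (dd m))^2 ≤ B2 := by
        rw [hB2]
        exact pow_le_pow_left₀ (rf.en_nonneg _) h3 2
      rwa [rf.en_sq (hddF m)] at h4
    have hB2nn : (0:ℝ) ≤ B2 := by rw [hB2] ; positivity
    -- subsequence selection
    have hstep : ∀ (ν k : ℕ), ∃ m : ℕ, ν < m ∧
        ∀ i ≤ ν, |rf.E (dd i) (dd m)| ≤ 1/((k:ℝ)+1) := by
      intro ν k
      have hδ : (0:ℝ) < 1/((k:ℝ)+1) := by positivity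
      have hNs : ∀ i : ℕ, ∃ N : ℕ, ∀ m ≥ N, |rf.E (dd i) (dd m)| ≤ 1/((k:ℝ)+1) := by
        intro i
        have h1 := hEd (dd i) (hddF i)
        rw [Metric.tendsto_atTop] at h1
        obtain ⟨N, hN⟩ := h1 (1/((k:ℝ)+1)) hδ
        refine ⟨N, fun m hm => ?_⟩
        have := hN m hm
        rw [Real.dist_eq, sub_zero] at this
        exact le_of_lt this
      choose Nf hNf using hNs
      set M := max (ν+1) ((Finset.range (ν+1)).sup Nf) with hM
      refine ⟨M, by omega, fun i hi => ?_⟩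
      apply hNf i
      calc Nf i ≤ (Finset.range (ν+1)).sup Nf :=
        Finset.le_sup (Finset.mem_range.2 (by omega))
      _ ≤ M := le_max_right _ _
    set nseq : ℕ → ℕ := fun k =>
      Nat.rec 0 (fun k' prev => Classical.choose (hstep prev k')) k with hnseq
    have hnseq_succ : ∀ k, nseq (k+1) = Classical.choose (hstep (nseq k) k) :=
      fun k => rfl
    have hnlt : ∀ k, nseq k < nseq (k+1) := by
      intro k
      rw [hnseq_succ k]
      exact (Classical.choose_spec (hstep (nseq k) k)).1
    have hnmono : Monotone nseq := monotone_nat_of_le_succ fun k => le_of_lt (hnlt k)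
    have hnprop : ∀ k, ∀ i ≤ nseq k, |rf.E (dd i) (dd (nseq (k+1)))| ≤ 1/((k:ℝ)+1) := by
      intro k
      rw [hnseq_succ k]
      exact (Classical.choose_spec (hstep (nseq k) k)).2
    -- averages
    set g : ℕ → X → ℝ := fun i => u - t (nseq i) with hg
    have hgF : ∀ i, g i ∈ rf.F := fun i => rf.sub_mem' hu (htF (nseq i))
    have hgdd : ∀ i, g i = (-1 : ℝ) • dd (nseq i) := by
      intro i
      funext z
      show u z - t (nseq i) z = (-1) * (t (nseq i) z - u z)
      ring
    have hgE : ∀ i j, rf.E (g i) (g j) = rf.E (dd (nseq i)) (dd (nseq j)) := by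
      intro i j
      rw [hgdd i, hgdd j,
        rf.smul_left _ _ (hddF (nseq i)) _ (rf.smul_mem _ (hddF (nseq j))),
        rf.smul_right' _ (hddF (nseq i)) (hddF (nseq j))]
      ring
    set A : ℕ → X → ℝ := fun k =>
      (1/((k:ℝ)+1)) • ∑ i ∈ Finset.range (k+1), t (nseq i) with hA
    have hAF : ∀ k, A k ∈ rf.F := fun k =>
      rf.smul_mem _ (rf.sum_mem' _ _ fun i _ => htF (nseq i))
    -- double sum bound
    have hoffdiag : ∀ j : ℕ, ∑ i ∈ Finset.range (j+1), rf.E (g i) (g (j+1)) ≤ 1 := by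
      intro j
      have hb : ∀ i ∈ Finset.range (j+1), rf.E (g i) (g (j+1)) ≤ 1/((j:ℝ)+1) := by
        intro i hi
        rw [hgE i (j+1)]
        have hle : nseq i ≤ nseq j := hnmono (by
          have := Finset.mem_range.1 hi ; omega)
        have := hnprop j (nseq i) hle
        exact le_trans (le_abs_self _) this
      calc ∑ i ∈ Finset.range (j+1), rf.E (g i) (g (j+1))
          ≤ ∑ _i ∈ Finset.range (j+1), 1/((j:ℝ)+1) := Finset.sum_le_sum hb
      _ = ((j:ℝ)+1) * (1/((j:ℝ)+1)) := by
          rw [Finset.sum_const, Finset.card_range, nsmul_eq_mul]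
          push_cast ; ring
      _ = 1 := by
          field_simp
    have hSS : ∀ k : ℕ, ∑ i ∈ Finset.range (k+1), ∑ j ∈ Finset.range (k+1),
        rf.E (g i) (g j) ≤ ((k:ℝ)+1) * (B2 + 2) := by
      intro k
      induction k with
      | zero =>
        simp only [zero_add, Finset.sum_range_one]
        have := hddB (nseq 0)
        rw [← hgE 0 0] at this
        push_cast
        linarith
      | succ k ih =>
        have hdec : ∑ i ∈ Finset.range (k+2), ∑ j ∈ Finset.range (k+2),
            rf.E (g i) (g j)
            = (∑ i ∈ Finset.range (k+1), ∑ j ∈ Finset.range (k+1), rf.E (g i) (g j))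
              + (∑ i ∈ Finset.range (k+1), rf.E (g i) (g (k+1)))
              + (∑ j ∈ Finset.range (k+1), rf.E (g (k+1)) (g j))
              + rf.E (g (k+1)) (g (k+1)) := by
          rw [Finset.sum_range_succ]
          rw [Finset.sum_range_succ (f := fun j => rf.E (g (k+1)) (g j))]
          have : ∀ i ∈ Finset.range (k+1),
              ∑ j ∈ Finset.range (k+2), rf.E (g i) (g j)
              = (∑ j ∈ Finset.range (k+1), rf.E (g i) (g j)) + rf.E (g i) (g (k+1)) :=
            fun i _ => Finset.sum_range_succ _ _
          rw [Finset.sum_congr rfl this, Finset.sum_add_distrib]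
          ring
        have hsym : ∑ j ∈ Finset.range (k+1), rf.E (g (k+1)) (g j)
            = ∑ i ∈ Finset.range (k+1), rf.E (g i) (g (k+1)) :=
          Finset.sum_congr rfl fun j _ => rf.symm _ (hgF (k+1)) _ (hgF j)
        have hdiag : rf.E (g (k+1)) (g (k+1)) ≤ B2 := by
          rw [hgE (k+1) (k+1)] ; exact hddB _
        have hoff := hoffdiag k
        rw [hdec, hsym]
        push_cast
        push_cast at ih
        linarith
    -- energy of u - A k
    have hAE : ∀ k : ℕ, rf.E (u - A k) (u - A k) ≤ (B2 + 2) / ((k:ℝ)+1) := by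
      intro k
      have hk1 : (0:ℝ) < (k:ℝ)+1 := by positivity
      set Sg := ∑ i ∈ Finset.range (k+1), g i with hSg
      have hSgF : Sg ∈ rf.F := rf.sum_mem' _ _ fun i _ => hgF i
      have hid : u - A k = (1/((k:ℝ)+1)) • Sg := by
        funext z
        show u z - (1/((k:ℝ)+1)) * (∑ i ∈ Finset.range (k+1), t (nseq i)) z
          = (1/((k:ℝ)+1)) * Sg z
        rw [Finset.sum_apply]
        have hSgz : Sg z = ∑ i ∈ Finset.range (k+1), (u z - t (nseq i) z) := by
          rw [hSg, Finset.sum_apply]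
          rfl
        rw [hSgz, Finset.sum_sub_distrib, Finset.sum_const, Finset.card_range,
          nsmul_eq_mul]
        push_cast
        field_simp
      have hEid : rf.E (u - A k) (u - A k)
          = (1/((k:ℝ)+1))^2 * rf.E Sg Sg := by
        rw [hid, rf.smul_left _ _ hSgF _ (rf.smul_mem _ hSgF),
          rf.smul_right' _ hSgF hSgF]
        ring
      have hESg : rf.E Sg Sg ≤ ((k:ℝ)+1) * (B2 + 2) := by
        rw [hSg, rf.E_sum_sum _ _ fun i _ => hgF i]
        exact hSS k
      rw [hEid]
      calc (1/((k:ℝ)+1))^2 * rf.E Sg Sg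
          ≤ (1/((k:ℝ)+1))^2 * (((k:ℝ)+1) * (B2 + 2)) := by
            apply mul_le_mul_of_nonneg_left hESg (by positivity)
      _ = (B2 + 2) / ((k:ℝ)+1) := by
          field_simp
    -- support properties
    have htzero : ∀ m (z : X), u z = 0 → t m z = 0 := by
      intro m z hz
      have happ1 : ((m1 m) • φ m) z = (m1 m) * φ m z := rfl
      have happ2 : (((-(m1 m))) • φ m) z = -((m1 m) * φ m z) := by
        show (-(m1 m)) * φ m z = -((m1 m) * φ m z) ; ring
      have hφnn : 0 ≤ (m1 m) * φ m z :=
        mul_nonneg (le_of_lt (hm1pos m)) (hφb m z).1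
      show max (s m z) ((((-(m1 m))) • φ m) z) = 0
      have hsz : s m z = 0 := by
        show min (u z) (((m1 m) • φ m) z) = 0
        rw [hz, happ1]
        exact min_eq_left hφnn
      rw [hsz, happ2]
      rw [max_eq_left (by linarith)]
    have htφ : ∀ m (z : X), φ m z = 0 → t m z = 0 := by
      intro m z hz
      have happ1 : ((m1 m) • φ m) z = (m1 m) * φ m z := rfl
      have happ2 : (((-(m1 m))) • φ m) z = -((m1 m) * φ m z) := by
        show (-(m1 m)) * φ m z = -((m1 m) * φ m z) ; ring
      show max (s m z) ((((-(m1 m))) • φ m) z) = 0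
      have hsz : s m z ≤ 0 := by
        show min (u z) (((m1 m) • φ m) z) ≤ 0
        rw [happ1, hz, mul_zero]
        exact min_le_right _ _
      rw [happ2, hz, mul_zero, neg_zero]
      exact max_eq_right hsz
    have hAzero : ∀ k (z : X), u z = 0 → A k z = 0 := by
      intro k z hz
      show (1/((k:ℝ)+1)) * (∑ i ∈ Finset.range (k+1), t (nseq i)) z = 0
      rw [Finset.sum_apply]
      have : ∀ i ∈ Finset.range (k+1), t (nseq i) z = 0 :=
        fun i _ => htzero (nseq i) z hz
      rw [Finset.sum_congr rfl this]
      simp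
    have hAsupp : ∀ k, tsupport (A k) ⊆ tsupport u := by
      intro k
      apply closure_mono
      intro z hz
      rw [Function.mem_support] at hz ⊢
      intro huz
      exact hz (hAzero k z huz)
    have hAcompact : ∀ k, HasCompactSupport (A k) := by
      intro k
      apply HasCompactSupport.intro (isCompact_closedBall x0 (ρm (nseq k)))
      intro z hz
      rw [Metric.mem_closedBall, not_le] at hz
      have hzfar : ∀ i ∈ Finset.range (k+1), t (nseq i) z = 0 := by
        intro i hi
        apply htφ
        apply hφvan
        have hρmono : ρm (nseq i) ≤ ρm (nseq k) := by
          have h1 : nseq i ≤ nseq k := hnmono (by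
            have := Finset.mem_range.1 hi ; omega)
          have h2 : m1 (nseq i) ≤ m1 (nseq k) := by
            simp only [hm1]
            exact_mod_cast Nat.add_le_add_right h1 1
          have h3 : (m1 (nseq i))^2 ≤ (m1 (nseq k))^2 :=
            pow_le_pow_left₀ (le_of_lt (hm1pos _)) h2 2
          simp only [hρm]
          nlinarith
        calc ρm (nseq i) ≤ ρm (nseq k) := hρmono
        _ ≤ dist x0 z := by rw [dist_comm x0 z] ; exact le_of_lt hz
      show (1/((k:ℝ)+1)) * (∑ i ∈ Finset.range (k+1), t (nseq i)) z = 0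
      rw [Finset.sum_apply, Finset.sum_congr rfl hzfar]
      simp
    -- conclusion
    refine ⟨A, fun k => ⟨hAF k, rf.continuous_of_mem hR (hAF k), hAcompact k,
      hAsupp k⟩, ?_⟩
    have hnonneg : ∀ k, 0 ≤ rf.E (u - A k) (u - A k) :=
      fun k => rf.nonneg _ (rf.sub_mem' hu (hAF k))
    have hlim : Tendsto (fun k : ℕ => (B2 + 2) / ((k:ℝ)+1)) atTop (𝓝 0) := by
      have h1 : (fun k : ℕ => (B2 + 2) / ((k:ℝ)+1))
          = fun k : ℕ => (B2 + 2) * (1/((k:ℝ)+1)) := by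
        funext k ; ring
      rw [h1]
      simpa using (tendsto_const_nhds (x := B2 + 2)).mul RFone_div_tendsto
    exact squeeze_zero hnonneg hAE hlim

end ResistanceForm
/-- Suppose the resistance metric `R` is complete and doubling.  For
every `u ∈ F` there is a sequence `{u_n} ⊆ F ∩ C₀(X,R)` with `supp(u_n) ⊆ supp(u)` and
`E(u − u_n, u − u_n) → 0`. -/
theorem dense_compactly_supported_approx {X : Type*} [MetricSpace X] [CompleteSpace X]
    (rf : ResistanceForm X) (hR : ∀ x y : X, dist x y = rf.rmetric x y)
    (hdb : DoublingOf fun x y : X => dist x y)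
    (u : X → ℝ) (hu : u ∈ rf.F) :
    ∃ un : ℕ → X → ℝ,
      (∀ n, un n ∈ rf.F ∧ Continuous (un n) ∧ HasCompactSupport (un n) ∧
        tsupport (un n) ⊆ tsupport u) ∧
      Tendsto (fun n => rf.E (u - un n) (u - un n)) atTop (𝓝 0) :=
  rf.main_approx hR hdb u hu
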